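/- arXiv:2304.14262 — 3 statements merged into one kernel-verified Lean document; each statement's English description precedes it below -/
import Mathlib

section
/- Monotonicity in demand: consider two instances on the same objects Ω, buyers N, supplies b and valuations v, with demand vectors d and d_new satisfying d j ≤ d_new j for all j ∈ N. Let p be a componentwise minimum Walrasian price vector for demands d and p_new one for demands d_new. Then p(i) ≤ p_new(i) for every object i ∈ Ω. -/
open Finset

section MarketDefs

variable {Ω N : Type*}

/-- A bundle for a buyer with demand `dj`: at most `b i` copies of each object,
at most `dj` items in total. -/
def IsBundle [Fintype Ω] (b : Ω → ℕ) (dj : ℕ) (y : Ω → ℕ) : Prop :=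
  (∀ i, y i ≤ b i) ∧ ∑ i, y i ≤ dj

/-- Utility of bundle `y` at prices `p` for a buyer with per-unit valuations `v`. -/
noncomputable def utility [Fintype Ω] (v : Ω → ℕ) (p : Ω → ℝ) (y : Ω → ℕ) : ℝ :=
  ∑ i, ((v i : ℝ) - p i) * (y i : ℝ)

/-- `y` is a preferred bundle (member of the demand set `D_j(p)`). -/
def InDemand [Fintype Ω] (b : Ω → ℕ) (dj : ℕ) (v : Ω → ℕ) (p : Ω → ℝ) (y : Ω → ℕ) : Prop :=
  IsBundle b dj y ∧ ∀ z, IsBundle b dj z → utility v p z ≤ utility v p y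

/-- Feasible allocation. -/
def Feasible [Fintype Ω] [Fintype N] (b : Ω → ℕ) (d : N → ℕ) (x : Ω → N → ℕ) : Prop :=
  (∀ i, ∑ j, x i j ≤ b i) ∧ ∀ j, ∑ i, x i j ≤ d j

/-- Stable allocation at prices `p`: feasible, and every buyer gets a preferred bundle. -/
def Stable [Fintype Ω] [Fintype N] (b : Ω → ℕ) (d : N → ℕ) (v : Ω → N → ℕ)
    (p : Ω → ℝ) (x : Ω → N → ℕ) : Prop :=
  Feasible b d x ∧ ∀ j, InDemand b (d j) (fun i => v i j) p (fun i => x i j)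

/-- Competitive price vector: nonnegative, and some allocation is stable for it. -/
def Competitive [Fintype Ω] [Fintype N] (b : Ω → ℕ) (d : N → ℕ) (v : Ω → N → ℕ)
    (p : Ω → ℝ) : Prop :=
  (∀ i, 0 ≤ p i) ∧ ∃ x, Stable b d v p x

/-- Walrasian price vector: some stable allocation sells as much as possible. -/
def Walrasian [Fintype Ω] [Fintype N] (b : Ω → ℕ) (d : N → ℕ) (v : Ω → N → ℕ)
    (p : Ω → ℝ) : Prop :=
  (∀ i, 0 ≤ p i) ∧ ∃ x, Stable b d v p x ∧
    ∑ i, ∑ j, x i j = min (∑ i, b i) (∑ j, d j)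

/-- Componentwise minimum Walrasian price vector. -/
def MinWalrasian [Fintype Ω] [Fintype N] (b : Ω → ℕ) (d : N → ℕ) (v : Ω → N → ℕ)
    (p : Ω → ℝ) : Prop :=
  Walrasian b d v p ∧ ∀ q, Walrasian b d v q → ∀ i, p i ≤ q i

end MarketDefs

section Aux
variable {Ω : Type*} [Fintype Ω] (b : Ω → ℕ)

noncomputable def mval (m : Ω → ℝ) (y : Ω → ℕ) : ℝ := ∑ i, m i * (y i : ℝ)
def IsBundle' (c : ℕ) (y : Ω → ℕ) : Prop := (∀ i, y i ≤ b i) ∧ ∑ i, y i ≤ c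

lemma sum_split_at [DecidableEq Ω] {M : Type*} [AddCommMonoid M] (f : Ω → M) (i : Ω) :
    ∑ i', f i' = f i + ∑ i' ∈ univ.erase i, f i' :=
  (Finset.add_sum_erase _ f (mem_univ i)).symm

lemma mval_update [DecidableEq Ω] (m : Ω → ℝ) (y : Ω → ℕ) (i : Ω) (n : ℕ) :
    mval m (Function.update y i n) = mval m y + m i * ((n : ℝ) - (y i : ℝ)) := by
  rw [mval, mval, sum_split_at _ i, sum_split_at (fun i' => m i' * (y i' : ℝ)) i]
  have : ∑ i' ∈ univ.erase i, m i' * ((Function.update y i n i' : ℕ) : ℝ)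
      = ∑ i' ∈ univ.erase i, m i' * (y i' : ℝ) := by
    refine Finset.sum_congr rfl fun i' hi' => ?_
    rw [Function.update_of_ne (Finset.ne_of_mem_erase hi')]
  rw [this, Function.update_self]
  ring

lemma nsum_update [DecidableEq Ω] (y : Ω → ℕ) (i : Ω) (n : ℕ) :
    ∑ i', Function.update y i n i' + y i = ∑ i', y i' + n := by
  rw [sum_split_at _ i, sum_split_at y i]
  have : ∑ i' ∈ univ.erase i, Function.update y i n i' = ∑ i' ∈ univ.erase i, y i' := by
    refine Finset.sum_congr rfl fun i' hi' => ?_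
    rw [Function.update_of_ne (Finset.ne_of_mem_erase hi')]
  rw [this, Function.update_self]
  omega

lemma bundle_set_finite (c : ℕ) : {y : Ω → ℕ | IsBundle' b c y}.Finite := by
  have : {y : Ω → ℕ | IsBundle' b c y} ⊆ Set.range (fun f : (∀ i : Ω, Fin (b i + 1)) => fun i => (f i : ℕ)) := by
    intro y hy
    exact ⟨fun i => ⟨y i, Nat.lt_succ_of_le (hy.1 i)⟩, rfl⟩
  exact Set.Finite.subset (Set.finite_range _) this

lemma exists_opt_bundle (m : Ω → ℝ) (c : ℕ) :
    ∃ y, IsBundle' b c y ∧ ∀ z, IsBundle' b c z → mval m z ≤ mval m y := by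
  classical
  have hfin := bundle_set_finite b c
  have hne : {y : Ω → ℕ | IsBundle' b c y}.Nonempty := by
    refine ⟨fun _ => 0, fun i => Nat.zero_le _, by simp⟩
  obtain ⟨y, hy, hmax⟩ := Set.exists_max_image _ (mval m) hfin hne
  exact ⟨y, hy, fun z hz => hmax z hz⟩

noncomputable def optB (m : Ω → ℝ) (c : ℕ) : Ω → ℕ := (exists_opt_bundle b m c).choose

lemma optB_bundle (m : Ω → ℝ) (c : ℕ) : IsBundle' b c (optB b m c) :=
  (exists_opt_bundle b m c).choose_spec.1

noncomputable def Fv (m : Ω → ℝ) (c : ℕ) : ℝ := mval m (optB b m c)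

lemma le_Fv {m : Ω → ℝ} {c : ℕ} {z : Ω → ℕ} (hz : IsBundle' b c z) : mval m z ≤ Fv b m c :=
  (exists_opt_bundle b m c).choose_spec.2 z hz

section Adjust
variable (m m' : Ω → ℝ) {c c' : ℕ} (ys zs : Ω → ℕ)

lemma adjust1 [DecidableEq Ω] (hcc : c ≤ c') (hys : IsBundle' b c ys) (hzs : IsBundle' b c' zs) :
    ∀ k, ∀ y z : Ω → ℕ,
    (∀ i, y i ≤ b i) → (∀ i, z i ≤ b i) →
    (∀ i, y i + z i = ys i + zs i) →
    (∀ i, m' i ≤ m i → y i = ys i) →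
    (∑ i, y i = c + k) →
    ∃ y' z', IsBundle' b c y' ∧ IsBundle' b c' z' ∧
      mval m y + mval m' z ≤ mval m y' + mval m' z' := by
  intro k
  induction k with
  | zero =>
    intro y z hyb hzb hsum hA hy
    have h1 : ∑ i, y i + ∑ i, z i = ∑ i, ys i + ∑ i, zs i := by
      rw [← Finset.sum_add_distrib, ← Finset.sum_add_distrib]
      exact sum_congr rfl fun i _ => hsum i
    have h2 := hys.2; have h3 := hzs.2
    exact ⟨y, z, ⟨hyb, by omega⟩, ⟨hzb, by omega⟩, le_refl _⟩
  | succ k ih =>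
    intro y z hyb hzb hsum hA hy
    have hAsum : ∑ i ∈ univ.filter (fun i => m' i ≤ m i), y i
        = ∑ i ∈ univ.filter (fun i => m' i ≤ m i), ys i :=
      sum_congr rfl fun i hi => hA i (by simpa using hi)
    have hysplit := Finset.sum_filter_add_sum_filter_not univ (fun i => m' i ≤ m i) y
    have hyssplit := Finset.sum_filter_add_sum_filter_not univ (fun i => m' i ≤ m i) ys
    have hys2 := hys.2
    have hlt : ∑ i ∈ univ.filter (fun i => ¬ (m' i ≤ m i)), ys i
        < ∑ i ∈ univ.filter (fun i => ¬ (m' i ≤ m i)), y i := by omega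
    obtain ⟨i, hi, hiy⟩ := Finset.exists_lt_of_sum_lt hlt
    have hiA : ¬ (m' i ≤ m i) := by simpa using (Finset.mem_filter.mp hi).2
    have hzi : z i < zs i := by have := hsum i; omega
    have hzib : z i + 1 ≤ b i := by have := hzs.1 i; omega
    have hyipos : 0 < y i := by omega
    set y1 := Function.update y i (y i - 1) with hy1
    set z1 := Function.update z i (z i + 1) with hz1
    have hy1sum : ∑ i', y1 i' = c + k := by
      have := nsum_update y i (y i - 1); rw [hy1]; omega
    obtain ⟨y', z', h1, h2, h3⟩ := ih y1 z1
      (fun i' => by by_cases h : i' = i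
                    · subst h; rw [hy1, Function.update_self]; have := hyb i'; omega
                    · rw [hy1, Function.update_of_ne h]; exact hyb i')
      (fun i' => by by_cases h : i' = i
                    · subst h; rw [hz1, Function.update_self]; omega
                    · rw [hz1, Function.update_of_ne h]; exact hzb i')
      (fun i' => by by_cases h : i' = i
                    · subst h; rw [hy1, hz1, Function.update_self, Function.update_self]
                      have := hsum i'; omega
                    · rw [hy1, hz1, Function.update_of_ne h, Function.update_of_ne h]; exact hsum i')
      (fun i' hm => by by_cases h : i' = i
                       · exact absurd hm (h ▸ hiA)
                       · rw [hy1, Function.update_of_ne h]; exact hA i' hm)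
      hy1sum
    refine ⟨y', z', h1, h2, le_trans ?_ h3⟩
    rw [hy1, hz1, mval_update, mval_update]
    have hcast : ((y i - 1 : ℕ) : ℝ) = (y i : ℝ) - 1 := by
      have : (1:ℕ) ≤ y i := hyipos
      push_cast [this]; ring
    rw [hcast]
    push_cast
    nlinarith [le_of_not_ge hiA]

lemma adjust2 [DecidableEq Ω] (hcc : c ≤ c') (hys : IsBundle' b c ys) (hzs : IsBundle' b c' zs) :
    ∀ k, ∀ y z : Ω → ℕ,
    (∀ i, y i ≤ b i) → (∀ i, z i ≤ b i) →
    (∀ i, y i + z i = ys i + zs i) →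
    (∀ i, ¬ (m' i ≤ m i) → z i = ys i) →
    (∑ i, z i = c' + k) →
    ∃ y' z', IsBundle' b c y' ∧ IsBundle' b c' z' ∧
      mval m y + mval m' z ≤ mval m y' + mval m' z' := by
  intro k
  induction k with
  | zero =>
    intro y z hyb hzb hsum hA hz
    have h1 : ∑ i, y i + ∑ i, z i = ∑ i, ys i + ∑ i, zs i := by
      rw [← Finset.sum_add_distrib, ← Finset.sum_add_distrib]
      exact sum_congr rfl fun i _ => hsum i
    have h2 := hys.2; have h3 := hzs.2
    exact ⟨y, z, ⟨hyb, by omega⟩, ⟨hzb, by omega⟩, le_refl _⟩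
  | succ k ih =>
    intro y z hyb hzb hsum hA hz
    have hAsum : ∑ i ∈ univ.filter (fun i => ¬ (m' i ≤ m i)), z i
        = ∑ i ∈ univ.filter (fun i => ¬ (m' i ≤ m i)), ys i :=
      sum_congr rfl fun i hi => hA i (by simpa using (Finset.mem_filter.mp hi).2)
    have hzsplit := Finset.sum_filter_add_sum_filter_not univ (fun i => m' i ≤ m i) z
    have hyssplit := Finset.sum_filter_add_sum_filter_not univ (fun i => m' i ≤ m i) ys
    have hys2 := hys.2
    have hlt : ∑ i ∈ univ.filter (fun i => m' i ≤ m i), ys i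
        < ∑ i ∈ univ.filter (fun i => m' i ≤ m i), z i := by omega
    obtain ⟨i, hi, hiz⟩ := Finset.exists_lt_of_sum_lt hlt
    have hiA : m' i ≤ m i := by simpa using (Finset.mem_filter.mp hi).2
    have hyi : y i < zs i := by have := hsum i; omega
    have hyib : y i + 1 ≤ b i := by have := hzs.1 i; omega
    have hzipos : 0 < z i := by omega
    set y1 := Function.update y i (y i + 1) with hy1
    set z1 := Function.update z i (z i - 1) with hz1
    have hz1sum : ∑ i', z1 i' = c' + k := by
      have := nsum_update z i (z i - 1); rw [hz1]; omega
    obtain ⟨y', z', h1, h2, h3⟩ := ih y1 z1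
      (fun i' => by by_cases h : i' = i
                    · subst h; rw [hy1, Function.update_self]; omega
                    · rw [hy1, Function.update_of_ne h]; exact hyb i')
      (fun i' => by by_cases h : i' = i
                    · subst h; rw [hz1, Function.update_self]; have := hzb i'; omega
                    · rw [hz1, Function.update_of_ne h]; exact hzb i')
      (fun i' => by by_cases h : i' = i
                    · subst h; rw [hy1, hz1, Function.update_self, Function.update_self]
                      have := hsum i'; omega
                    · rw [hy1, hz1, Function.update_of_ne h, Function.update_of_ne h]; exact hsum i')
      (fun i' hm => by by_cases h : i' = i
                       · exact absurd hiA (h ▸ hm)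
                       · rw [hz1, Function.update_of_ne h]; exact hA i' hm)
      hz1sum
    refine ⟨y', z', h1, h2, le_trans ?_ h3⟩
    rw [hy1, hz1, mval_update, mval_update]
    have hcast : ((z i - 1 : ℕ) : ℝ) = (z i : ℝ) - 1 := by
      have : (1:ℕ) ≤ z i := hzipos
      push_cast [this]; ring
    rw [hcast]
    push_cast
    nlinarith [hiA]

end Adjust

lemma lemmaB (m m' : Ω → ℝ) {c c' : ℕ} (hcc : c ≤ c') :
    Fv b (fun i => max (m i) (m' i)) c + Fv b (fun i => min (m i) (m' i)) c'
      ≤ Fv b m c + Fv b m' c' := by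
  classical
  set ys := optB b (fun i => max (m i) (m' i)) c with hysdef
  set zs := optB b (fun i => min (m i) (m' i)) c' with hzsdef
  have hys := optB_bundle b (fun i => max (m i) (m' i)) c
  have hzs := optB_bundle b (fun i => min (m i) (m' i)) c'
  set y0 : Ω → ℕ := fun i => if m' i ≤ m i then ys i else zs i with hy0
  set z0 : Ω → ℕ := fun i => if m' i ≤ m i then zs i else ys i with hz0
  have hval : Fv b (fun i => max (m i) (m' i)) c + Fv b (fun i => min (m i) (m' i)) c'
      = mval m y0 + mval m' z0 := by
    rw [Fv, Fv, ← hysdef, ← hzsdef, mval, mval, mval, mval,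
      ← Finset.sum_add_distrib, ← Finset.sum_add_distrib]
    refine sum_congr rfl fun i _ => ?_
    by_cases h : m' i ≤ m i
    · simp only [hy0, hz0, if_pos h, max_eq_left h, min_eq_right h]; try ring
    · have h' := le_of_not_ge h
      simp only [hy0, hz0, if_neg h, max_eq_right h', min_eq_left h']; try ring
  have hy0b : ∀ i, y0 i ≤ b i := fun i => by
    by_cases h : m' i ≤ m i
    · simpa [hy0, h] using hys.1 i
    · simpa [hy0, h] using hzs.1 i
  have hz0b : ∀ i, z0 i ≤ b i := fun i => by
    by_cases h : m' i ≤ m i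
    · simpa [hz0, h] using hzs.1 i
    · simpa [hz0, h] using hys.1 i
  have hsum0 : ∀ i, y0 i + z0 i = ys i + zs i := fun i => by
    by_cases h : m' i ≤ m i
    · simp [hy0, hz0, h]
    · simp [hy0, hz0, h]; omega
  have key : ∃ y' z', IsBundle' b c y' ∧ IsBundle' b c' z' ∧
      mval m y0 + mval m' z0 ≤ mval m y' + mval m' z' := by
    rcases le_or_gt (∑ i, y0 i) c with hyc | hyc
    · rcases le_or_gt (∑ i, z0 i) c' with hzc | hzc
      · exact ⟨y0, z0, ⟨hy0b, hyc⟩, ⟨hz0b, hzc⟩, le_refl _⟩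
      · obtain ⟨k, hk⟩ := Nat.exists_eq_add_of_le (le_of_lt hzc)
        exact adjust2 b m m' ys zs hcc hys hzs k y0 z0 hy0b hz0b hsum0
          (fun i h => by simp only [hz0, if_neg h]) (by omega)
    · obtain ⟨k, hk⟩ := Nat.exists_eq_add_of_le (le_of_lt hyc)
      exact adjust1 b m m' ys zs hcc hys hzs k y0 z0 hy0b hz0b hsum0
        (fun i h => by simp only [hy0, if_pos h]) (by omega)
  obtain ⟨y', z', h1, h2, h3⟩ := key
  rw [hval]
  exact le_trans h3 (add_le_add (le_Fv b h1) (le_Fv b h2))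

end Aux

section Market
variable {Ω N : Type*} [Fintype Ω] [Fintype N]
variable (v : Ω → N → ℕ) (b : Ω → ℕ) (d : N → ℕ) (p : Ω → ℝ)

/-- total amount of object i sold -/
def sold (x : Ω → N → ℕ) (i : Ω) : ℕ := ∑ j, x i j

def Good (x : Ω → N → ℕ) : Prop :=
  Stable b d v p x ∧ ∑ i, ∑ j, x i j = min (∑ i, b i) (∑ j, d j)

lemma isBundle_iff (c : ℕ) (y : Ω → ℕ) : IsBundle b c y ↔ IsBundle' b c y := Iff.rfl

lemma utility_eq_mval (w : Ω → ℕ) (y : Ω → ℕ) :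
    utility w p y = mval (fun i => (w i : ℝ) - p i) y := rfl

section Swap
variable [DecidableEq Ω] [DecidableEq N]

def swapCol (y : Ω → ℕ) (i0 i1 : Ω) : Ω → ℕ :=
  Function.update (Function.update y i1 (y i1 - 1)) i0 (y i0 + 1)

lemma swapCol_i0 (y : Ω → ℕ) {i0 i1 : Ω} (h : i0 ≠ i1) : swapCol y i0 i1 i0 = y i0 + 1 := by
  rw [swapCol, Function.update_self]

lemma swapCol_i1 (y : Ω → ℕ) {i0 i1 : Ω} (h : i0 ≠ i1) : swapCol y i0 i1 i1 = y i1 - 1 := by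
  rw [swapCol, Function.update_of_ne (Ne.symm h), Function.update_self]

lemma swapCol_other (y : Ω → ℕ) {i0 i1 i : Ω} (h0 : i ≠ i0) (h1 : i ≠ i1) :
    swapCol y i0 i1 i = y i := by
  rw [swapCol, Function.update_of_ne h0, Function.update_of_ne h1]

lemma swapCol_sum (y : Ω → ℕ) {i0 i1 : Ω} (h : i0 ≠ i1) (h1 : 0 < y i1) :
    ∑ i, swapCol y i0 i1 i = ∑ i, y i := by
  have e1 := nsum_update y i1 (y i1 - 1)
  have e2 := nsum_update (Function.update y i1 (y i1 - 1)) i0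
    ((Function.update y i1 (y i1 - 1)) i0 + 1)
  have e3 : Function.update y i1 (y i1 - 1) i0 = y i0 := Function.update_of_ne h _ _
  have e4 : swapCol y i0 i1 = Function.update (Function.update y i1 (y i1 - 1)) i0
      ((Function.update y i1 (y i1 - 1)) i0 + 1) := by
    rw [swapCol, e3]
  rw [e4]
  omega

lemma swapCol_mval (m : Ω → ℝ) (y : Ω → ℕ) {i0 i1 : Ω} (h : i0 ≠ i1) (h1 : 0 < y i1) :
    mval m (swapCol y i0 i1) = mval m y + (m i0 - m i1) := by
  have e3 : Function.update y i1 (y i1 - 1) i0 = y i0 := Function.update_of_ne h _ _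
  have e4 : swapCol y i0 i1 = Function.update (Function.update y i1 (y i1 - 1)) i0
      ((Function.update y i1 (y i1 - 1)) i0 + 1) := by
    rw [swapCol, e3]
  rw [e4, mval_update, e3, mval_update]
  have hc : ((y i1 - 1 : ℕ) : ℝ) = (y i1 : ℝ) - 1 := by
    have : (1:ℕ) ≤ y i1 := h1
    push_cast [this]; ring
  rw [hc]
  push_cast
  ring

def swapA (x : Ω → N → ℕ) (j : N) (i0 i1 : Ω) : Ω → N → ℕ :=
  fun i j' => if j' = j then swapCol (fun i' => x i' j) i0 i1 i else x i j'

lemma swapA_col_self (x : Ω → N → ℕ) (j : N) (i0 i1 : Ω) :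
    (fun i => swapA x j i0 i1 i j) = swapCol (fun i' => x i' j) i0 i1 := by
  funext i; simp [swapA]

lemma swapA_col_other (x : Ω → N → ℕ) {j j' : N} (h : j' ≠ j) (i0 i1 : Ω) :
    (fun i => swapA x j i0 i1 i j') = fun i => x i j' := by
  funext i; simp [swapA, h]

lemma sold_swapA (x : Ω → N → ℕ) (j : N) {i0 i1 : Ω} (h : i0 ≠ i1) (h1 : 0 < x i1 j) (i : Ω) :
    sold (swapA x j i0 i1) i
      = if i = i0 then sold x i + 1 else if i = i1 then sold x i - 1 else sold x i := by
  have key : sold (swapA x j i0 i1) i + x i j = swapCol (fun i' => x i' j) i0 i1 i + sold x i := by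
    rw [sold, sold, sum_split_at (fun j' => swapA x j i0 i1 i j') j,
        sum_split_at (fun j' => x i j') j]
    have : ∑ j' ∈ univ.erase j, swapA x j i0 i1 i j' = ∑ j' ∈ univ.erase j, x i j' := by
      refine Finset.sum_congr rfl fun j' hj' => ?_
      simp [swapA, Finset.ne_of_mem_erase hj']
    rw [this]
    have : swapA x j i0 i1 i j = swapCol (fun i' => x i' j) i0 i1 i := by simp [swapA]
    rw [this]
    omega
  have hxsold : x i j ≤ sold x i := by
    rw [sold]
    exact Finset.single_le_sum (f := fun j' => x i j') (fun _ _ => Nat.zero_le _) (mem_univ j)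
  by_cases hi0 : i = i0
  · subst hi0; rw [if_pos rfl] ; rw [swapCol_i0 _ h] at key; omega
  · by_cases hi1 : i = i1
    · subst hi1; rw [if_neg hi0, if_pos rfl]; rw [swapCol_i1 _ h] at key; omega
    · rw [if_neg hi0, if_neg hi1]; rw [swapCol_other _ hi0 hi1] at key; omega

lemma step_good {x : Ω → N → ℕ} (hx : Good v b d p x) {j : N} {i0 i1 : Ω}
    (h01 : i0 ≠ i1) (hold : 0 < x i1 j) (havail : x i0 j < b i0)
    (hslack : sold x i0 < b i0)
    (htie : (v i0 j : ℝ) - p i0 = (v i1 j : ℝ) - p i1) :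
    Good v b d p (swapA x j i0 i1) := by
  obtain ⟨⟨hfeas, hstab⟩, hsales⟩ := hx
  have hcolsum : ∀ j', ∑ i, swapA x j i0 i1 i j' = ∑ i, x i j' := by
    intro j'
    by_cases hj : j' = j
    · subst hj
      have := swapA_col_self x j' i0 i1
      calc ∑ i, swapA x j' i0 i1 i j' = ∑ i, swapCol (fun i' => x i' j') i0 i1 i := by
            refine sum_congr rfl fun i _ => ?_; simp [swapA]
        _ = ∑ i, x i j' := swapCol_sum _ h01 hold
    · refine sum_congr rfl fun i _ => ?_; simp [swapA, hj]
  refine ⟨⟨⟨?_, ?_⟩, ?_⟩, ?_⟩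
  · -- supply
    intro i
    have hs := sold_swapA x j h01 hold i
    rw [sold] at hs
    rw [hs]
    have hlink : sold x i = ∑ j', x i j' := rfl
    have hsupp : sold x i ≤ b i := hfeas.1 i
    by_cases hi0 : i = i0
    · subst hi0; rw [if_pos rfl]; omega
    · by_cases hi1 : i = i1
      · subst hi1; rw [if_neg hi0, if_pos rfl]; omega
      · rw [if_neg hi0, if_neg hi1]; omega
  · -- demand caps
    intro j'
    rw [hcolsum j']
    exact hfeas.2 j'
  · -- InDemand
    intro j'
    by_cases hj : j' = j
    · subst hj
      obtain ⟨⟨hb1, hb2⟩, hopt⟩ := hstab j'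
      have hcol := swapA_col_self x j' i0 i1
      rw [hcol]
      constructor
      · constructor
        · intro i
          by_cases hi0 : i = i0
          · subst hi0; rw [swapCol_i0 _ h01]; omega
          · by_cases hi1 : i = i1
            · subst hi1; rw [swapCol_i1 _ h01]
              have h5 : x i j' ≤ b i := hb1 i
              omega
            · rw [swapCol_other _ hi0 hi1]; exact hb1 i
        · rw [swapCol_sum _ h01 hold]; exact hb2
      · intro z hz
        have hu : utility (fun i => v i j') p (swapCol (fun i' => x i' j') i0 i1)
            = utility (fun i => v i j') p (fun i => x i j') := by
          rw [utility_eq_mval, utility_eq_mval, swapCol_mval _ _ h01 hold]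
          show mval _ (fun i => x i j') + (((v i0 j' : ℝ) - p i0) - ((v i1 j' : ℝ) - p i1))
              = mval _ (fun i => x i j')
          rw [htie]
          ring
        rw [hu]
        exact hopt z hz
    · rw [swapA_col_other x hj]
      exact hstab j'
  · -- sales
    rw [Finset.sum_comm]
    rw [Finset.sum_comm (γ := Ω)] at hsales
    calc ∑ j', ∑ i, swapA x j i0 i1 i j' = ∑ j', ∑ i, x i j' :=
          sum_congr rfl fun j' _ => hcolsum j'
      _ = _ := hsales

end Swap
end Market

section Paths
variable {Ω N : Type*} [Fintype Ω] [Fintype N]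
variable (v : Ω → N → ℕ) (b : Ω → ℕ) (d : N → ℕ) (p : Ω → ℝ)

/-- a valid swap path: at each step, the buyer holds the next object, the current
object is available to him in bundle terms, and margins tie. -/
def ValidP (x : Ω → N → ℕ) : Ω → List (N × Ω) → Prop
  | _, [] => True
  | e, s :: r => 0 < x s.2 s.1 ∧ x e s.1 < b e ∧
      ((v e s.1 : ℝ) - p e = (v s.2 s.1 : ℝ) - p s.2) ∧ ValidP x s.2 r

def endOf : Ω → List (N × Ω) → Ω
  | e, [] => e
  | _, s :: r => endOf s.2 r

lemma endOf_mem_ne : ∀ (l : List (N × Ω)) (e : Ω), l ≠ [] → endOf e l ∈ l.map Prod.snd := by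
  intro l
  induction l with
  | nil => intro e h; exact absurd rfl h
  | cons s r ih =>
    intro e _
    by_cases hr : r = []
    · subst hr; simp [endOf]
    · have := ih s.2 hr
      simp only [endOf, List.map_cons, List.mem_cons]
      right; exact this

lemma valid_append (x : Ω → N → ℕ) :
    ∀ (l : List (N × Ω)) (e : Ω) (j1 : N) (i1 : Ω),
    ValidP v b p x e l → 0 < x i1 j1 → x (endOf e l) j1 < b (endOf e l) →
    ((v (endOf e l) j1 : ℝ) - p (endOf e l) = (v i1 j1 : ℝ) - p i1) →
    ValidP v b p x e (l ++ [(j1, i1)]) ∧ endOf e (l ++ [(j1, i1)]) = i1 := by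
  intro l
  induction l with
  | nil =>
    intro e j1 i1 _ h1 h2 h3
    exact ⟨⟨h1, h2, h3, trivial⟩, rfl⟩
  | cons s r ih =>
    intro e j1 i1 hv h1 h2 h3
    obtain ⟨ha, hb', hc, hd'⟩ := hv
    obtain ⟨hv', he'⟩ := ih s.2 j1 i1 hd' h1 h2 h3
    exact ⟨⟨ha, hb', hc, hv'⟩, he'⟩

lemma valid_suffix (x : Ω → N → ℕ) :
    ∀ (l : List (N × Ω)) (e e' : Ω),
    ValidP v b p x e l → e' ∈ l.map Prod.snd →
    ∃ l₂ : List (N × Ω), l₂.length < l.length ∧ ValidP v b p x e' l₂ ∧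
      endOf e' l₂ = endOf e l ∧ (∀ a ∈ l₂.map Prod.snd, a ∈ l.map Prod.snd) := by
  intro l
  induction l with
  | nil => intro e e' _ h; simp at h
  | cons s r ih =>
    intro e e' hv he'
    obtain ⟨ha, hb', hc, hd'⟩ := hv
    by_cases h2 : e' = s.2
    · subst h2
      refine ⟨r, by simp, hd', rfl, ?_⟩
      intro a ha'; simp only [List.map_cons, List.mem_cons]; right; exact ha'
    · have he'' : e' ∈ r.map Prod.snd := by
        simp only [List.map_cons, List.mem_cons] at he'
        rcases he' with h | h
        · exact absurd h h2
        · exact h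
      obtain ⟨l₂, hl1, hl2, hl3, hl4⟩ := ih s.2 e' hd' he''
      refine ⟨l₂, by simp; omega, hl2, hl3, ?_⟩
      intro a ha'; simp only [List.map_cons, List.mem_cons]; right; exact hl4 a ha'

lemma valid_prune (x : Ω → N → ℕ) :
    ∀ (n : ℕ) (l : List (N × Ω)) (e : Ω), l.length ≤ n → ValidP v b p x e l →
    ∃ l', ValidP v b p x e l' ∧ endOf e l' = endOf e l ∧
      (e :: l'.map Prod.snd).Nodup ∧ (∀ a ∈ l'.map Prod.snd, a ∈ l.map Prod.snd) := by
  intro n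
  induction n with
  | zero =>
    intro l e hl _
    have : l = [] := List.length_eq_zero_iff.mp (Nat.le_zero.mp hl)
    subst this
    exact ⟨[], trivial, rfl, by simp, by simp⟩
  | succ m ih =>
    intro l e hl hv
    by_cases he : e ∈ l.map Prod.snd
    · obtain ⟨l₂, h1, h2, h3, h4⟩ := valid_suffix v b p x l e e hv he
      obtain ⟨l', g1, g2, g3, g4⟩ := ih l₂ e (by omega) h2
      exact ⟨l', g1, by rw [g2, h3], g3, fun a ha => h4 a (g4 a ha)⟩
    · cases l with
      | nil => exact ⟨[], trivial, rfl, by simp, by simp⟩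
      | cons s r =>
        obtain ⟨ha, hb', hc, hd'⟩ := hv
        obtain ⟨r', g1, g2, g3, g4⟩ := ih r s.2 (by simp at hl; omega) hd'
        refine ⟨s :: r', ⟨ha, hb', hc, g1⟩, g2, ?_, ?_⟩
        · rw [List.nodup_cons]
          constructor
          · intro hmem
            simp only [List.map_cons, List.mem_cons] at hmem
            rcases hmem with h | h
            · exact he (by simp [h])
            · exact he (by simp only [List.map_cons, List.mem_cons]; right; exact g4 e h)
          · rw [List.map_cons, List.nodup_cons] at *
            exact g3
        · intro a ha'
          simp only [List.map_cons, List.mem_cons] at ha' ⊢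
          rcases ha' with h | h
          · left; exact h
          · right; exact g4 a h

lemma valid_of_agree (x x₁ : Ω → N → ℕ) :
    ∀ (l : List (N × Ω)) (e : Ω), ValidP v b p x e l →
    (∀ j', x₁ e j' ≤ x e j') →
    (∀ i'' ∈ l.map Prod.snd, ∀ j', x₁ i'' j' = x i'' j') →
    ValidP v b p x₁ e l := by
  intro l
  induction l with
  | nil => intro _ _ _ _; trivial
  | cons s r ih =>
    intro e hv hle heq
    obtain ⟨ha, hb', hc, hd'⟩ := hv
    have hs2 : ∀ j', x₁ s.2 j' = x s.2 j' := heq s.2 (by simp)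
    refine ⟨by rw [hs2]; exact ha, lt_of_le_of_lt (hle s.1) hb', hc, ?_⟩
    exact ih s.2 hd' (fun j' => le_of_eq (hs2 j')) (fun i'' hi'' j' => heq i'' (by simp only [List.map_cons, List.mem_cons]; right; exact hi'') j')

lemma realize [DecidableEq Ω] [DecidableEq N] :
    ∀ (l : List (N × Ω)) (x : Ω → N → ℕ) (e : Ω), Good v b d p x →
    ValidP v b p x e l → (e :: l.map Prod.snd).Nodup → sold x e < b e →
    ∃ x', Good v b d p x' ∧
      (∀ i, i ≠ e → i ≠ endOf e l → sold x' i = sold x i) ∧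
      ((sold x' e = sold x e + 1 ∧ sold x' (endOf e l) + 1 = sold x (endOf e l)) ∨
        (l = [] ∧ ∀ i, sold x' i = sold x i)) := by
  intro l
  induction l with
  | nil =>
    intro x e hg _ _ _
    exact ⟨x, hg, fun _ _ _ => rfl, Or.inr ⟨rfl, fun _ => rfl⟩⟩
  | cons s r ih =>
    intro x e hg hv hnd hsl
    obtain ⟨hold, havail, htie, hvr⟩ := hv
    have hnd' := hnd
    rw [List.map_cons, List.nodup_cons] at hnd'
    have hei1 : e ≠ s.2 := fun h => hnd'.1 (by simp [h])
    have henr : e ∉ r.map Prod.snd := fun h => hnd'.1 (by simp only [List.mem_cons]; right; exact h)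
    -- swap: buyer s.1 gives up a unit of s.2 and takes a unit of e
    set x1 := swapA x s.1 e s.2 with hx1def
    have hx1good : Good v b d p x1 := step_good v b d p hg hei1 hold havail hsl htie
    have hsold1 : ∀ i, sold x1 i = if i = e then sold x i + 1 else if i = s.2 then sold x i - 1 else sold x i :=
      sold_swapA x s.1 hei1 hold
    have hxi1pos : 0 < sold x s.2 := by
      have : x s.2 s.1 ≤ sold x s.2 :=
        Finset.single_le_sum (f := fun j' => x s.2 j') (fun _ _ => Nat.zero_le _) (mem_univ s.1)
      omega
    have hsolds2 : sold x s.2 ≤ b s.2 := hg.1.1.1 s.2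
    -- validity of the remaining path in x1
    have hv1 : ValidP v b p x1 s.2 r := by
      refine valid_of_agree v b p x x1 r s.2 hvr ?_ ?_
      · intro j'
        show swapA x s.1 e s.2 s.2 j' ≤ x s.2 j'
        rw [swapA]
        by_cases hj : j' = s.1
        · subst hj; rw [if_pos rfl, swapCol_i1 _ hei1]; omega
        · rw [if_neg hj]
      · intro i'' hi'' j'
        have h1 : i'' ≠ e := fun h => henr (h ▸ hi'')
        have h2 : i'' ≠ s.2 := fun h => (List.nodup_cons.mp hnd'.2).1 (h ▸ hi'')
        show swapA x s.1 e s.2 i'' j' = x i'' j'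
        rw [swapA]
        by_cases hj : j' = s.1
        · subst hj; rw [if_pos rfl, swapCol_other _ h1 h2]
        · rw [if_neg hj]
    have hnd1 : (s.2 :: r.map Prod.snd).Nodup := hnd'.2
    have hsl1 : sold x1 s.2 < b s.2 := by
      rw [hsold1 s.2, if_neg (Ne.symm hei1), if_pos rfl]; omega
    obtain ⟨x', hgood', hprof, hend⟩ := ih x1 s.2 hx1good hv1 hnd1 hsl1
    have hendof : endOf e (s :: r) = endOf s.2 r := rfl
    have hfmem : endOf s.2 r ∈ s.2 :: r.map Prod.snd := by
      by_cases hr : r = []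
      · subst hr; simp [endOf]
      · simp only [List.mem_cons]; right; exact endOf_mem_ne r s.2 hr
    have hfne : endOf s.2 r ≠ e := by
      intro h
      rcases List.mem_cons.mp hfmem with h' | h'
      · exact hei1 (h.symm.trans h')
      · exact henr (h ▸ h')
    refine ⟨x', hgood', ?_, ?_⟩
    · intro i hie hif
      rw [hendof] at hif
      by_cases his : i = s.2
      · subst his
        rcases hend with ⟨h1, h2⟩ | ⟨h1, h2⟩
        · -- r ≠ [] effectively; endpoint differs from i
          rw [h1, hsold1 s.2, if_neg (Ne.symm hei1), if_pos rfl]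
          omega
        · subst h1
          exact absurd rfl hif
      · rw [hprof i his hif, hsold1 i, if_neg hie, if_neg his]
    · left
      have hA : sold x' e = sold x1 e :=
        hprof e hei1 (fun h => hfne h.symm)
      constructor
      · rw [hA, hsold1 e, if_pos rfl]
      · rw [hendof]
        rcases hend with ⟨h1, h2⟩ | ⟨h1, h2⟩
        · by_cases hr : r = []
          · exfalso
            subst hr
            have he1 : endOf s.2 ([] : List (N × Ω)) = s.2 := rfl
            rw [he1] at h2
            omega
          · have hfmem' : endOf s.2 r ∈ r.map Prod.snd := endOf_mem_ne r s.2 hr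
            have hfs2 : endOf s.2 r ≠ s.2 := fun h => (List.nodup_cons.mp hnd1).1 (h ▸ hfmem')
            rw [h2, hsold1 (endOf s.2 r), if_neg hfne, if_neg hfs2]
        · subst h1
          have he1 : endOf s.2 ([] : List (N × Ω)) = s.2 := rfl
          rw [he1, h2 s.2, hsold1 s.2, if_neg (Ne.symm hei1), if_pos rfl]
          omega
end Paths

section Perturb
variable {Ω N : Type*} [Fintype Ω] [Fintype N]
variable (v : Ω → N → ℕ) (b : Ω → ℕ) (d : N → ℕ) (p : Ω → ℝ)

/-- the exchange argument: an optimal bundle of a capped buyer carries at least as many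
units from a tie-closed set `T` as any other optimal bundle. -/
lemma exchange_Tsum [DecidableEq Ω] (T : Finset Ω) (x : Ω → N → ℕ) (j : N)
    (hbnd : IsBundle' b (d j) (fun i => x i j))
    (hopt : ∀ z, IsBundle' b (d j) z →
      utility (fun i => v i j) p z ≤ utility (fun i => v i j) p (fun i => x i j))
    (hcap : ∑ i, x i j = d j)
    (hclosed : ∀ (i i1 : Ω), i ∈ T → x i j < b i → 0 < x i1 j →
      ((v i j : ℝ) - p i = (v i1 j : ℝ) - p i1) → i1 ∈ T)
    (z : Ω → ℕ) (hz : IsBundle' b (d j) z)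
    (hzeq : utility (fun i => v i j) p z = utility (fun i => v i j) p (fun i => x i j)) :
    ∑ i ∈ T, z i ≤ ∑ i ∈ T, x i j := by
  by_contra hgt
  push_neg at hgt
  obtain ⟨i2, hi2T, hi2⟩ := Finset.exists_lt_of_sum_lt hgt
  -- every object the buyer holds in excess of z lies in T
  have hsub : ∀ i1, z i1 < x i1 j → i1 ∈ T := by
    intro i1 hi1
    have hne : i2 ≠ i1 := fun h => by rw [h] at hi2; omega
    have hz2b : z i2 ≤ b i2 := hz.1 i2
    have hx1b : x i1 j ≤ b i1 := hbnd.1 i1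
    have hpos1 : 0 < x i1 j := by omega
    have hpos2 : 0 < z i2 := by omega
    -- swap in x : i1 → i2
    have hsw1 : IsBundle' b (d j) (swapCol (fun i => x i j) i2 i1) := by
      constructor
      · intro i
        by_cases h2 : i = i2
        · subst h2; rw [swapCol_i0 _ hne]; omega
        · by_cases h1 : i = i1
          · subst h1; rw [swapCol_i1 _ hne]; omega
          · rw [swapCol_other _ h2 h1]; exact hbnd.1 i
      · rw [swapCol_sum _ hne hpos1]; exact hbnd.2
    have hcmp1 := hopt _ hsw1
    rw [utility_eq_mval, utility_eq_mval, swapCol_mval _ _ hne hpos1] at hcmp1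
    have hle1 : ((v i2 j : ℝ) - p i2) ≤ ((v i1 j : ℝ) - p i1) := by
      have : mval (fun i => (v i j : ℝ) - p i) (fun i => x i j)
          + (((v i2 j : ℝ) - p i2) - ((v i1 j : ℝ) - p i1))
          ≤ mval (fun i => (v i j : ℝ) - p i) (fun i => x i j) := hcmp1
      linarith
    -- swap in z : i2 → i1
    have hne' : i1 ≠ i2 := Ne.symm hne
    have hsw2 : IsBundle' b (d j) (swapCol z i1 i2) := by
      constructor
      · intro i
        by_cases h1 : i = i1
        · subst h1; rw [swapCol_i0 _ hne']; omega
        · by_cases h2 : i = i2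
          · subst h2; rw [swapCol_i1 _ hne']; omega
          · rw [swapCol_other _ h1 h2]; exact hz.1 i
      · rw [swapCol_sum _ hne' hpos2]; exact hz.2
    have hcmp2 := hopt _ hsw2
    rw [utility_eq_mval, utility_eq_mval, swapCol_mval _ _ hne' hpos2, ← utility_eq_mval,
      ← utility_eq_mval, hzeq] at hcmp2
    have hle2 : ((v i1 j : ℝ) - p i1) ≤ ((v i2 j : ℝ) - p i2) := by linarith
    have htie : (v i2 j : ℝ) - p i2 = (v i1 j : ℝ) - p i1 := le_antisymm hle1 hle2
    exact hclosed i2 i1 hi2T (by omega) hpos1 htie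
  -- counting
  have houtside : ∀ i ∈ univ.filter (fun i => i ∉ T), x i j ≤ z i := by
    intro i hi
    have hniT : i ∉ T := by simpa using (Finset.mem_filter.mp hi).2
    by_contra h
    exact hniT (hsub i (by omega))
  have h1 : ∑ i ∈ univ.filter (fun i => i ∉ T), x i j ≤ ∑ i ∈ univ.filter (fun i => i ∉ T), z i :=
    Finset.sum_le_sum houtside
  have h2 : ∑ i ∈ univ.filter (fun i => i ∈ T), x i j + ∑ i ∈ univ.filter (fun i => i ∉ T), x i j = ∑ i, x i j :=
    Finset.sum_filter_add_sum_filter_not univ _ _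
  have h3 : ∑ i ∈ univ.filter (fun i => i ∈ T), z i + ∑ i ∈ univ.filter (fun i => i ∉ T), z i = ∑ i, z i :=
    Finset.sum_filter_add_sum_filter_not univ _ _
  have hTeq : ∀ (w : Ω → ℕ), ∑ i ∈ univ.filter (fun i => i ∈ T), w i = ∑ i ∈ T, w i := by
    intro w
    refine Finset.sum_congr ?_ (fun _ _ => rfl)
    ext i; simp
  have hzsum : ∑ i, z i ≤ d j := hz.2
  rw [hTeq] at h2 h3
  omega

lemma perturb [DecidableEq Ω] (T : Finset Ω)
    (x : Ω → N → ℕ) (hx : Good v b d p x)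
    (hcap : ∀ j, ∑ i, x i j = d j)
    (hclosed : ∀ (j : N) (i i1 : Ω), i ∈ T → x i j < b i → 0 < x i1 j →
      ((v i j : ℝ) - p i = (v i1 j : ℝ) - p i1) → i1 ∈ T)
    (hpos : ∀ i ∈ T, 0 < p i) (hpnn : ∀ i, 0 ≤ p i)
    (i0 : Ω) (hi0 : i0 ∈ T) :
    ∃ q : Ω → ℝ, Walrasian b d v q ∧ q i0 < p i0 := by
  classical
  -- the minimum gap
  set gapSet : Finset ℝ := univ.biUnion (fun j : N =>
      ((bundle_set_finite b (d j)).toFinset.filter (fun z =>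
        utility (fun i => v i j) p z < utility (fun i => v i j) p (fun i => x i j))).image
        (fun z => (utility (fun i => v i j) p (fun i => x i j) - utility (fun i => v i j) p z) / (d j + 1)))
    with hgapSet
  set E : Finset ℝ := insert 1 ((T.image p) ∪ gapSet) with hE
  have hEne : E.Nonempty := ⟨1, by simp [hE]⟩
  set ε : ℝ := E.min' hEne with hεdef
  have hεmem := E.min'_mem hEne
  have hεpos : 0 < ε := by
    rw [hεdef]
    have : ∀ r ∈ E, 0 < r := by
      intro r hr
      rw [hE] at hr
      rcases Finset.mem_insert.mp hr with h | h
      · rw [h]; norm_num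
      · rcases Finset.mem_union.mp h with h | h
        · obtain ⟨i, hiT, hip⟩ := Finset.mem_image.mp h
          rw [← hip]; exact hpos i hiT
        · rw [hgapSet] at h
          obtain ⟨j, _, hj⟩ := Finset.mem_biUnion.mp h
          obtain ⟨z, hzmem, hzval⟩ := Finset.mem_image.mp hj
          have hlt := (Finset.mem_filter.mp hzmem).2
          rw [← hzval]
          apply div_pos (by linarith) (by positivity)
    exact this _ (E.min'_mem hEne)
  have hεle : ∀ i ∈ T, ε ≤ p i := fun i hi =>
    Finset.min'_le E _ (by rw [hE]; exact Finset.mem_insert_of_mem (Finset.mem_union_left _ (Finset.mem_image_of_mem p hi)))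
  have hεgap : ∀ (j : N) (z : Ω → ℕ), IsBundle' b (d j) z →
      utility (fun i => v i j) p z < utility (fun i => v i j) p (fun i => x i j) →
      ε * (d j) < utility (fun i => v i j) p (fun i => x i j) - utility (fun i => v i j) p z := by
    intro j z hbz hlt
    have hmem : (utility (fun i => v i j) p (fun i => x i j) - utility (fun i => v i j) p z) / (d j + 1) ∈ E := by
      rw [hE]
      refine Finset.mem_insert_of_mem (Finset.mem_union_right _ ?_)
      rw [hgapSet]
      refine Finset.mem_biUnion.mpr ⟨j, mem_univ j, Finset.mem_image.mpr ⟨z, ?_, rfl⟩⟩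
      exact Finset.mem_filter.mpr ⟨(bundle_set_finite b (d j)).mem_toFinset.mpr hbz, hlt⟩
    have h1 : ε ≤ (utility (fun i => v i j) p (fun i => x i j) - utility (fun i => v i j) p z) / (d j + 1) :=
      Finset.min'_le E _ hmem
    have h2 : (0:ℝ) < (d j : ℝ) + 1 := by positivity
    have h3 := (le_div_iff₀ h2).mp h1
    nlinarith
  -- the perturbed price
  set q : Ω → ℝ := fun i => if i ∈ T then p i - ε else p i with hq
  have hshift : ∀ (j : N) (y : Ω → ℕ),
      utility (fun i => v i j) q y = utility (fun i => v i j) p y + ε * ∑ i ∈ T, (y i : ℝ) := by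
    intro j y
    have h1 : ∀ i, ((v i j : ℝ) - q i) * (y i : ℝ)
        = ((v i j : ℝ) - p i) * (y i : ℝ) + (if i ∈ T then ε * (y i : ℝ) else 0) := by
      intro i
      simp only [hq]
      by_cases hi : i ∈ T
      · simp only [if_pos hi]; ring
      · simp only [if_neg hi]; ring
    have h2 : ∑ i, (if i ∈ T then ε * (y i : ℝ) else 0) = ε * ∑ i ∈ T, (y i : ℝ) := by
      rw [Finset.sum_ite_mem, Finset.univ_inter, Finset.mul_sum]
    rw [utility, utility, Finset.sum_congr rfl (fun i _ => h1 i), Finset.sum_add_distrib, h2]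
  have hcapbuyers : ∀ j, IsBundle' b (d j) (fun i => x i j) := fun j => (hx.1.2 j).1
  have hstab : ∀ j, ∀ z, IsBundle' b (d j) z →
      utility (fun i => v i j) p z ≤ utility (fun i => v i j) p (fun i => x i j) :=
    fun j => (hx.1.2 j).2
  refine ⟨q, ⟨?_, x, ⟨hx.1.1, ?_⟩, hx.2⟩, ?_⟩
  · intro i
    simp only [hq]
    by_cases hi : i ∈ T
    · rw [if_pos hi]
      have := hεle i hi
      linarith
    · rw [if_neg hi]
      exact hpnn i
  · intro j
    refine ⟨hcapbuyers j, ?_⟩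
    intro z hz
    rw [hshift j z, hshift j (fun i => x i j)]
    rcases lt_or_ge (utility (fun i => v i j) p z) (utility (fun i => v i j) p (fun i => x i j)) with hlt | hge
    · have hg := hεgap j z hz hlt
      have hTz : ∑ i ∈ T, (z i : ℝ) ≤ (d j : ℝ) := by
        have h1 : ∑ i ∈ T, z i ≤ d j :=
          le_trans (Finset.sum_le_sum_of_subset (Finset.subset_univ T)) hz.2
        calc ∑ i ∈ T, (z i : ℝ) = ((∑ i ∈ T, z i : ℕ) : ℝ) := by push_cast; rfl
          _ ≤ (d j : ℝ) := by exact_mod_cast h1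
      have hTx : (0:ℝ) ≤ ε * ∑ i ∈ T, ((x i j : ℕ) : ℝ) := by
        apply mul_nonneg (le_of_lt hεpos)
        positivity
      have : ε * ∑ i ∈ T, (z i : ℝ) ≤ ε * (d j : ℝ) :=
        mul_le_mul_of_nonneg_left hTz (le_of_lt hεpos)
      linarith
    · have heq : utility (fun i => v i j) p z = utility (fun i => v i j) p (fun i => x i j) :=
        le_antisymm (hstab j z hz) hge
      have hTle := exchange_Tsum v b d p T x j (hcapbuyers j) (hstab j) (hcap j)
        (fun i i1 => hclosed j i i1) z hz heq
      have : ε * ∑ i ∈ T, (z i : ℝ) ≤ ε * ∑ i ∈ T, ((x i j : ℕ) : ℝ) := by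
        apply mul_le_mul_of_nonneg_left _ (le_of_lt hεpos)
        exact_mod_cast hTle
      linarith
  · simp only [hq]
    rw [if_pos hi0]
    linarith

end Perturb

section FullSale
variable {Ω N : Type*} [Fintype Ω] [Fintype N]
variable (v : Ω → N → ℕ) (b : Ω → ℕ) (d : N → ℕ) (p : Ω → ℝ)

lemma sold_le (x : Ω → N → ℕ) (hx : Good v b d p x) (i : Ω) : sold x i ≤ b i := hx.1.1.1 i

lemma fullsale [DecidableEq Ω] [DecidableEq N]
    (hp : MinWalrasian b d v p) (S : Finset Ω) (hSpos : ∀ i ∈ S, 0 < p i) :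
    ∃ x, Good v b d p x ∧ ∀ i ∈ S, sold x i = b i := by
  classical
  obtain ⟨⟨hpnn, x0, hx0s, hx0sales⟩, hmin⟩ := hp
  have hx0 : Good v b d p x0 := ⟨hx0s, hx0sales⟩
  set ach : Set ℕ := {n | ∃ x, Good v b d p x ∧ ∑ i ∈ S, sold x i = n} with hach
  have hne : ach.Nonempty := ⟨_, x0, hx0, rfl⟩
  have hbdd : BddAbove ach := by
    refine ⟨∑ i ∈ S, b i, fun n hn => ?_⟩
    obtain ⟨x, hx, hxn⟩ := hn
    rw [← hxn]
    exact Finset.sum_le_sum fun i _ => sold_le v b d p x hx i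
  have hM := Nat.sSup_mem hne hbdd
  obtain ⟨xh, hxh, hxhM⟩ := hM
  have hmax : ∀ x, Good v b d p x → ∑ i ∈ S, sold x i ≤ sSup ach :=
    fun x hx => le_csSup hbdd ⟨x, hx, rfl⟩
  refine ⟨xh, hxh, ?_⟩
  by_contra hcon
  push_neg at hcon
  obtain ⟨i0, hi0S, hi0⟩ := hcon
  have hi0lt : sold xh i0 < b i0 := lt_of_le_of_ne (sold_le v b d p xh hxh i0) hi0
  -- all buyers are capped
  have hsoldsum : ∑ i, sold xh i = ∑ i, ∑ j, xh i j := rfl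
  have hBstrict : ∑ i, sold xh i < ∑ i, b i :=
    Finset.sum_lt_sum (fun i _ => sold_le v b d p xh hxh i) ⟨i0, mem_univ i0, hi0lt⟩
  have htotal : ∑ i, ∑ j, xh i j = ∑ j, d j := by
    have h1 := hxh.2
    rcases min_cases (∑ i, b i) (∑ j, d j) with ⟨hm, hle⟩ | ⟨hm, hle⟩ <;> omega
  have hcap : ∀ j, ∑ i, xh i j = d j := by
    have hcomm : ∑ j, ∑ i, xh i j = ∑ j, d j := by
      rw [Finset.sum_comm]; exact htotal
    intro j
    by_contra hne'
    have hlt : ∑ i, xh i j < d j := lt_of_le_of_ne (hxh.1.1.2 j) hne'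
    have : ∑ j, ∑ i, xh i j < ∑ j, d j :=
      Finset.sum_lt_sum (fun j' _ => hxh.1.1.2 j') ⟨j, mem_univ j, hlt⟩
    omega
  -- the tie-closure of i0
  set Tset : Set Ω := {i' | ∃ l, ValidP v b p xh i0 l ∧ endOf i0 l = i'} with hTset
  set Tf : Finset Ω := univ.filter (fun i => i ∈ Tset) with hTf
  have hi0T : i0 ∈ Tf := by
    rw [hTf]
    exact Finset.mem_filter.mpr ⟨mem_univ _, ⟨[], trivial, rfl⟩⟩
  by_cases hz : ∀ i' ∈ Tf, 0 < p i'
  · -- perturbation contradicts minimality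
    have hclosed : ∀ (j : N) (i i1 : Ω), i ∈ Tf → xh i j < b i → 0 < xh i1 j →
        ((v i j : ℝ) - p i = (v i1 j : ℝ) - p i1) → i1 ∈ Tf := by
      intro j i i1 hiT havail hold htie
      obtain ⟨l, hvl, hel⟩ := (Finset.mem_filter.mp hiT).2
      obtain ⟨hv2, he2⟩ := valid_append v b p xh l i0 j i1 hvl hold (hel ▸ havail) (hel ▸ htie)
      exact Finset.mem_filter.mpr ⟨mem_univ _, ⟨l ++ [(j, i1)], hv2, he2⟩⟩
    obtain ⟨q, hqw, hqlt⟩ := perturb v b d p Tf xh hxh hcap hclosed hz hpnn i0 hi0T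
    have := hmin q hqw i0
    linarith
  · -- a zero-priced object is reachable: augment, contradicting maximality
    push_neg at hz
    obtain ⟨iz, hizT, hizp⟩ := hz
    obtain ⟨l, hvl, hel⟩ := (Finset.mem_filter.mp hizT).2
    obtain ⟨l', hvl', hel', hnd', _⟩ := valid_prune v b p xh l.length l i0 le_rfl hvl
    rw [hel] at hel'
    have hizi0 : iz ≠ i0 := by
      intro h
      rw [h] at hizp
      exact absurd (hSpos i0 hi0S) (not_lt.mpr hizp)
    have hl'ne : l' ≠ [] := by
      intro h
      rw [h] at hel'
      exact hizi0 hel'.symm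
    obtain ⟨xt, hxt, hprof, hend⟩ := realize v b d p l' xh i0 hxh hvl' hnd' hi0lt
    rcases hend with ⟨h1, h2⟩ | ⟨h1, _⟩
    · rw [hel'] at h2
      have hizS : iz ∉ S := fun h => absurd (hSpos iz h) (not_lt.mpr hizp)
      have hsum : ∑ i ∈ S, sold xt i = ∑ i ∈ S, sold xh i + 1 := by
        rw [← Finset.add_sum_erase _ _ hi0S, ← Finset.add_sum_erase _ (fun i => sold xh i) hi0S]
        have herase : ∑ i ∈ S.erase i0, sold xt i = ∑ i ∈ S.erase i0, sold xh i := by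
          refine Finset.sum_congr rfl fun i hi => ?_
          have hine : i ≠ i0 := Finset.ne_of_mem_erase hi
          have hinz : i ≠ endOf i0 l' := by
            rw [hel']
            intro h
            exact hizS (h ▸ Finset.mem_of_mem_erase hi)
          exact hprof i hine hinz
        rw [herase, h1]
        omega
      have := hmax xt hxt
      omega
    · exact hl'ne h1

end FullSale

/-- monotonicity of buyer-optimal Walrasian prices in the demand. -/
theorem min_walrasian_prices_monotone_in_demand
    {Ω N : Type*} [Fintype Ω] [Fintype N]
    (v : Ω → N → ℕ) (b : Ω → ℕ) (d dnew : N → ℕ)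
    (hd : ∀ j, d j ≤ dnew j)
    (p pnew : Ω → ℝ)
    (hp : MinWalrasian b d v p) (hpnew : MinWalrasian b dnew v pnew) :
    ∀ i, p i ≤ pnew i := by
  classical
  have hpnn : ∀ i, 0 ≤ p i := hp.1.1
  obtain ⟨hpnn', x', hx's, hx'sales⟩ := hpnew.1
  set S : Finset Ω := univ.filter (fun i => pnew i < p i) with hS
  have hSpos : ∀ i ∈ S, 0 < p i := by
    intro i hi
    have h1 : pnew i < p i := by
      have := (Finset.mem_filter.mp hi).2
      simpa using this
    have := hpnn' i
    linarith
  obtain ⟨xh, hxh, hfull⟩ := fullsale v b d p hp S hSpos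
  set q : Ω → ℝ := fun i => min (p i) (pnew i) with hq
  set Δ : Ω → ℝ := fun i => max (p i - pnew i) 0 with hΔ
  -- γ margin is the max of the two margins
  have hγ : ∀ j, (fun i => (v i j : ℝ) - q i)
      = (fun i => max ((v i j : ℝ) - p i) ((v i j : ℝ) - pnew i)) := by
    intro j
    funext i'
    simp only [hq]
    rcases le_total (p i') (pnew i') with h | h
    · rw [min_eq_left h, max_eq_left (by linarith)]
    · rw [min_eq_right h, max_eq_right (by linarith)]
  have key1 : ∀ j, Fv b (fun i => (v i j : ℝ) - q i) (d j)
      + Fv b (fun i => min ((v i j : ℝ) - p i) ((v i j : ℝ) - pnew i)) (dnew j)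
      ≤ Fv b (fun i => (v i j : ℝ) - p i) (d j)
        + Fv b (fun i => (v i j : ℝ) - pnew i) (dnew j) := by
    intro j
    rw [hγ j]
    exact lemmaB b _ _ (hd j)
  -- Fv equals the utility of the stable allocations
  have hFα : ∀ j, Fv b (fun i => (v i j : ℝ) - p i) (d j)
      = mval (fun i => (v i j : ℝ) - p i) (fun i => xh i j) := by
    intro j
    apply le_antisymm
    · exact (hxh.1.2 j).2 _ (optB_bundle b _ _)
    · exact le_Fv b (hxh.1.2 j).1
  have hFβ : ∀ j, Fv b (fun i => (v i j : ℝ) - pnew i) (dnew j)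
      = mval (fun i => (v i j : ℝ) - pnew i) (fun i => x' i j) := by
    intro j
    apply le_antisymm
    · exact (hx's.2 j).2 _ (optB_bundle b _ _)
    · exact le_Fv b (hx's.2 j).1
  have hFmin : ∀ j, mval (fun i => min ((v i j : ℝ) - p i) ((v i j : ℝ) - pnew i)) (fun i => x' i j)
      ≤ Fv b (fun i => min ((v i j : ℝ) - p i) ((v i j : ℝ) - pnew i)) (dnew j) :=
    fun j => le_Fv b (hx's.2 j).1
  -- difference identities
  have hb5 : ∀ j, mval (fun i => (v i j : ℝ) - pnew i) (fun i => x' i j)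
      - mval (fun i => min ((v i j : ℝ) - p i) ((v i j : ℝ) - pnew i)) (fun i => x' i j)
      = ∑ i, Δ i * (x' i j : ℝ) := by
    intro j
    rw [mval, mval, ← Finset.sum_sub_distrib]
    refine Finset.sum_congr rfl fun i' _ => ?_
    simp only [hΔ]
    rcases le_total (p i') (pnew i') with h | h
    · rw [min_eq_right (by linarith : (v i' j : ℝ) - pnew i' ≤ (v i' j : ℝ) - p i'),
        max_eq_right (by linarith : p i' - pnew i' ≤ 0)]
      ring
    · rw [min_eq_left (by linarith : (v i' j : ℝ) - p i' ≤ (v i' j : ℝ) - pnew i'),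
        max_eq_left (by linarith : (0:ℝ) ≤ p i' - pnew i')]
      ring
  have h8 : ∀ j, mval (fun i => (v i j : ℝ) - q i) (fun i => xh i j)
      = mval (fun i => (v i j : ℝ) - p i) (fun i => xh i j) + ∑ i, Δ i * (xh i j : ℝ) := by
    intro j
    rw [mval, mval, ← Finset.sum_add_distrib]
    refine Finset.sum_congr rfl fun i' _ => ?_
    simp only [hq, hΔ]
    rcases le_total (p i') (pnew i') with h | h
    · rw [min_eq_left h, max_eq_right (by linarith : p i' - pnew i' ≤ 0)]
      ring
    · rw [min_eq_right h, max_eq_left (by linarith : (0:ℝ) ≤ p i' - pnew i')]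
      ring
  -- the crucial supply comparison on S
  have hΔsum : ∑ j, ∑ i, Δ i * (x' i j : ℝ) ≤ ∑ j, ∑ i, Δ i * (xh i j : ℝ) := by
    rw [Finset.sum_comm, Finset.sum_comm (f := fun j i => Δ i * (xh i j : ℝ))]
    refine Finset.sum_le_sum fun i' _ => ?_
    rw [← Finset.mul_sum, ← Finset.mul_sum]
    rcases le_or_gt (p i') (pnew i') with h | h
    · have hΔ0 : Δ i' = 0 := by
        simp only [hΔ]
        rw [max_eq_right (by linarith : p i' - pnew i' ≤ 0)]
      rw [hΔ0]
      simp
    · have hiS : i' ∈ S := by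
        rw [hS]
        exact Finset.mem_filter.mpr ⟨mem_univ _, h⟩
      have hΔpos : 0 ≤ Δ i' := le_max_right _ _
      apply mul_le_mul_of_nonneg_left _ hΔpos
      have h1 : sold x' i' ≤ b i' := hx's.1.1 i'
      have h2 : sold xh i' = b i' := hfull i' hiS
      have h3 : sold x' i' ≤ sold xh i' := by omega
      have h4 : (∑ j, (x' i' j : ℝ)) = ((sold x' i' : ℕ) : ℝ) := by rw [sold]; push_cast; rfl
      have h5 : (∑ j, (xh i' j : ℝ)) = ((sold xh i' : ℕ) : ℝ) := by rw [sold]; push_cast; rfl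
      rw [h4, h5]
      exact_mod_cast h3
  -- summing everything
  have hsum1 : ∑ j, Fv b (fun i => (v i j : ℝ) - q i) (d j)
      ≤ ∑ j, mval (fun i => (v i j : ℝ) - q i) (fun i => xh i j) := by
    have step1 : ∑ j, Fv b (fun i => (v i j : ℝ) - q i) (d j)
        ≤ ∑ j, (mval (fun i => (v i j : ℝ) - p i) (fun i => xh i j) + ∑ i, Δ i * (x' i j : ℝ)) := by
      refine Finset.sum_le_sum fun j _ => ?_
      have k1 := key1 j
      have k2 := hFα j
      have k3 := hFβ j
      have k4 := hFmin j
      have k5 := hb5 j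
      linarith
    have step2 : ∑ j, (mval (fun i => (v i j : ℝ) - p i) (fun i => xh i j) + ∑ i, Δ i * (x' i j : ℝ))
        = ∑ j, mval (fun i => (v i j : ℝ) - p i) (fun i => xh i j) + ∑ j, ∑ i, Δ i * (x' i j : ℝ) :=
      Finset.sum_add_distrib
    have step3 : ∑ j, mval (fun i => (v i j : ℝ) - q i) (fun i => xh i j)
        = ∑ j, mval (fun i => (v i j : ℝ) - p i) (fun i => xh i j) + ∑ j, ∑ i, Δ i * (xh i j : ℝ) := by
      rw [← Finset.sum_add_distrib]
      exact Finset.sum_congr rfl fun j _ => h8 j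
    rw [step3]
    rw [step2] at step1
    linarith
  have hle : ∀ j, mval (fun i => (v i j : ℝ) - q i) (fun i => xh i j)
      ≤ Fv b (fun i => (v i j : ℝ) - q i) (d j) :=
    fun j => le_Fv b (hxh.1.2 j).1
  have heq : ∀ j, mval (fun i => (v i j : ℝ) - q i) (fun i => xh i j)
      = Fv b (fun i => (v i j : ℝ) - q i) (d j) := by
    by_contra hcon
    push_neg at hcon
    obtain ⟨j0, hj0⟩ := hcon
    have hlt := lt_of_le_of_ne (hle j0) hj0
    have := Finset.sum_lt_sum (fun j _ => hle j) ⟨j0, mem_univ j0, hlt⟩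
    linarith
  have hW : Walrasian b d v q := by
    refine ⟨fun i => le_min (hpnn i) (hpnn' i), xh, ⟨hxh.1.1, ?_⟩, hxh.2⟩
    intro j
    refine ⟨(hxh.1.2 j).1, ?_⟩
    intro z hz
    have h1 : utility (fun i => v i j) q z = mval (fun i => (v i j : ℝ) - q i) z := rfl
    have h2 : utility (fun i => v i j) q (fun i => xh i j)
        = mval (fun i => (v i j : ℝ) - q i) (fun i => xh i j) := rfl
    rw [h1, h2, heq j]
    exact le_Fv b hz
  intro i
  have h1 := hp.2 q hW i
  have h2 : q i ≤ pnew i := min_le_right _ _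
  linarith
end

section
/- Monotonicity in supply: consider two instances on the same objects Ω, buyers N, demands d and valuations v, with supply vectors b and b_new satisfying b_new i ≤ b i for all i ∈ Ω. Let p be a componentwise minimum Walrasian price vector for supplies b and p_new one for supplies b_new. Then p(i) ≤ p_new(i) for every object i with b_new i > 0. -/
open Finset

section Aux

variable {Ω : Type*} [Fintype Ω] [DecidableEq Ω]

lemma utility_split (v : Ω → ℕ) (s : Ω → ℝ) (y : Ω → ℕ) (k : Ω) :
    utility v s y = ((v k : ℝ) - s k) * (y k : ℝ)
      + ∑ i ∈ Finset.univ.erase k, ((v i : ℝ) - s i) * (y i : ℝ) :=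
  (Finset.add_sum_erase _ _ (mem_univ k)).symm

lemma utility_update (v : Ω → ℕ) (s : Ω → ℝ) (y : Ω → ℕ) (k : Ω) (m : ℕ) :
    utility v s (Function.update y k m)
      = utility v s y + ((v k : ℝ) - s k) * ((m : ℝ) - (y k : ℝ)) := by
  rw [utility_split v s (Function.update y k m) k, utility_split v s y k]
  have h1 : ∀ i ∈ Finset.univ.erase k,
      ((v i : ℝ) - s i) * ((Function.update y k m i : ℕ) : ℝ)
        = ((v i : ℝ) - s i) * (y i : ℝ) := by
    intro i hi
    rw [Function.update_of_ne (Finset.mem_erase.mp hi).1]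
  rw [Finset.sum_congr rfl h1, Function.update_self]
  ring

lemma sum_update_sub (y : Ω → ℕ) (k : Ω) (h : 1 ≤ y k) :
    ∑ i, Function.update y k (y k - 1) i = (∑ i, y i) - 1 := by
  rw [Finset.sum_update_of_mem (mem_univ k), Finset.sdiff_singleton_eq_erase,
    ← Finset.add_sum_erase _ y (mem_univ k)]
  omega

lemma sum_update_add (y : Ω → ℕ) (k : Ω) (m : ℕ) :
    ∑ i, Function.update y k m i = (∑ i, y i) - y k + m := by
  rw [Finset.sum_update_of_mem (mem_univ k), Finset.sdiff_singleton_eq_erase,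
    ← Finset.add_sum_erase _ y (mem_univ k)]
  omega

/-- removing one unit of good `k` from a bundle -/
lemma bundle_remove {b : Ω → ℕ} {dj : ℕ} {y : Ω → ℕ} (hy : IsBundle b dj y)
    (k : Ω) (hk : 1 ≤ y k) (v : Ω → ℕ) (s : Ω → ℝ) :
    IsBundle b dj (Function.update y k (y k - 1)) ∧
    utility v s (Function.update y k (y k - 1))
      = utility v s y - ((v k : ℝ) - s k) := by
  constructor
  · constructor
    · intro i
      rcases eq_or_ne i k with rfl | hne
      · rw [Function.update_self]; exact le_trans (Nat.sub_le _ _) (hy.1 i)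
      · rw [Function.update_of_ne hne]; exact hy.1 i
    · have h2 := hy.2
      rw [sum_update_sub y k hk]; omega
  · rw [utility_update v s y k (y k - 1)]
    have h3 : ((y k - 1 : ℕ) : ℝ) = (y k : ℝ) - 1 := by
      push_cast [Nat.cast_sub hk]; ring
    rw [h3]; ring

/-- adding one unit of good `k` to a bundle -/
lemma bundle_add {b : Ω → ℕ} {dj : ℕ} {y : Ω → ℕ} (hy : IsBundle b dj y)
    (k : Ω) (hk : y k < b k) (hsum : ∑ i, y i < dj) (v : Ω → ℕ) (s : Ω → ℝ) :
    IsBundle b dj (Function.update y k (y k + 1)) ∧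
    utility v s (Function.update y k (y k + 1))
      = utility v s y + ((v k : ℝ) - s k) := by
  constructor
  · constructor
    · intro i
      rcases eq_or_ne i k with rfl | hne
      · rw [Function.update_self]; omega
      · rw [Function.update_of_ne hne]; exact hy.1 i
    · have hle : y k ≤ ∑ i, y i := Finset.single_le_sum (fun i _ => Nat.zero_le _) (mem_univ k)
      rw [sum_update_add]; omega
  · rw [utility_update v s y k (y k + 1)]; push_cast; ring

/-- swapping one unit of good `i0` for one unit of good `k` -/
lemma bundle_swap {b : Ω → ℕ} {dj : ℕ} {y : Ω → ℕ} (hy : IsBundle b dj y)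
    {i0 k : Ω} (hne : i0 ≠ k) (hi0 : 1 ≤ y i0) (hk : y k < b k) (v : Ω → ℕ) (s : Ω → ℝ) :
    IsBundle b dj (Function.update (Function.update y i0 (y i0 - 1)) k (y k + 1)) ∧
    utility v s (Function.update (Function.update y i0 (y i0 - 1)) k (y k + 1))
      = utility v s y + (((v k : ℝ) - s k) - ((v i0 : ℝ) - s i0)) := by
  have h1 := bundle_remove hy i0 hi0 v s
  have hyk : (Function.update y i0 (y i0 - 1)) k = y k := Function.update_of_ne (Ne.symm hne) _ _
  have h2 := bundle_add h1.1 k (by rw [hyk]; exact hk)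
      (by have h2 := hy.2
          have hle : y i0 ≤ ∑ i, y i := Finset.single_le_sum (fun i _ => Nat.zero_le _) (mem_univ i0)
          rw [sum_update_sub y i0 hi0]; omega) v s
  constructor
  · have := h2.1; rwa [hyk] at this
  · rw [hyk] at h2; rw [h2.2, h1.2]; ring

/-- existence of a demanded bundle minimizing a secondary criterion -/
lemma exists_demand_min (b : Ω → ℕ) (dj : ℕ) (v : Ω → ℕ) (s : Ω → ℝ) (Φ : (Ω → ℕ) → ℕ) :
    ∃ y, InDemand b dj v s y ∧ ∀ z, InDemand b dj v s z → Φ y ≤ Φ z := by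
  classical
  set B : Finset (Ω → ℕ) :=
    (Fintype.piFinset fun i => Finset.range (b i + 1)).filter (fun y => ∑ i, y i ≤ dj) with hB
  have hmem : ∀ y, y ∈ B ↔ IsBundle b dj y := by
    intro y
    simp only [hB, Finset.mem_filter, Fintype.mem_piFinset, Finset.mem_range, Nat.lt_succ_iff]
    exact Iff.rfl
  have hne : B.Nonempty := ⟨fun _ => 0, (hmem _).2 ⟨fun i => Nat.zero_le _, by simp⟩⟩
  obtain ⟨y₀, hy₀B, hy₀max⟩ := B.exists_max_image (utility v s) hne
  set D : Finset (Ω → ℕ) := B.filter (fun y => ∀ z ∈ B, utility v s z ≤ utility v s y) with hD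
  have hy₀D : y₀ ∈ D := Finset.mem_filter.mpr ⟨hy₀B, hy₀max⟩
  obtain ⟨y, hyD, hymin⟩ := D.exists_min_image Φ ⟨y₀, hy₀D⟩
  rw [hD, Finset.mem_filter] at hyD
  refine ⟨y, ⟨(hmem _).1 hyD.1, fun z hz => hyD.2 z ((hmem _).2 hz)⟩, ?_⟩
  intro z hz
  exact hymin z (Finset.mem_filter.mpr ⟨(hmem _).2 hz.1, fun w hw => hz.2 w ((hmem _).1 hw)⟩)

/-- Key per-buyer lemma: there is a bundle demanded at the mixed prices `q` that does not
use good `i` beyond `xn i` unless `xn` is saturated at `i`. -/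
lemma lemC (b bnew : Ω → ℕ) (p pnew q : Ω → ℝ) (dj : ℕ) (vj : Ω → ℕ) (xn : Ω → ℕ)
    (hbb : ∀ i, bnew i ≤ b i)
    (hqA : ∀ i, 0 < bnew i → pnew i < p i → q i = pnew i)
    (hqB : ∀ i, ¬(0 < bnew i ∧ pnew i < p i) → q i = p i)
    (hxn : InDemand bnew dj vj pnew xn) :
    ∃ y, InDemand b dj vj q y ∧
      ∀ i, 0 < bnew i → pnew i < p i → xn i < bnew i → y i ≤ xn i := by
  classical
  set Φ : (Ω → ℕ) → ℕ :=
    fun y => ∑ i, if (0 < bnew i ∧ pnew i < p i) ∧ xn i < bnew i then y i - xn i else 0 with hΦ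
  obtain ⟨y, hyD, hymin⟩ := exists_demand_min b dj vj q Φ
  refine ⟨y, hyD, ?_⟩
  intro i0 h1 h2 h3
  by_contra hgt
  push_neg at hgt
  have hqi0 : q i0 = pnew i0 := hqA _ h1 h2
  have hΦlt : ∀ y' : Ω → ℕ, y' i0 = y i0 - 1 → (∀ i, i ≠ i0 → y' i ≤ max (y i) (xn i)) →
      Φ y' < Φ y := by
    intro y' h0 hrest
    apply Finset.sum_lt_sum
    · intro i _
      rcases eq_or_ne i i0 with rfl | hne
      · simp only [h0]
        split
        · omega
        · omega
      · have := hrest i hne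
        split
        · omega
        · omega
    · refine ⟨i0, mem_univ _, ?_⟩
      simp only [h0, if_pos (show ((0 < bnew i0 ∧ pnew i0 < p i0) ∧ xn i0 < bnew i0) from ⟨⟨h1, h2⟩, h3⟩)]
      omega
  by_cases hs : ∑ i, xn i < dj
  · -- unfilled demand in the small market: the marginal value of i0 is nonpositive
    have hadd := bundle_add hxn.1 i0 h3 hs vj pnew
    have hmarg : (vj i0 : ℝ) - pnew i0 ≤ 0 := by
      have := hxn.2 _ hadd.1
      rw [hadd.2] at this; linarith
    have hrem := bundle_remove hyD.1 i0 (by omega) vj q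
    have hopt : InDemand b dj vj q (Function.update y i0 (y i0 - 1)) := by
      refine ⟨hrem.1, fun z hz => ?_⟩
      have h4 := hyD.2 z hz
      rw [hrem.2, hqi0]; linarith
    have := hymin _ hopt
    have hlt := hΦlt (Function.update y i0 (y i0 - 1)) (Function.update_self _ _ _)
      (fun i hne => by rw [Function.update_of_ne hne]; exact le_max_left _ _)
    omega
  · -- the small-market bundle fills demand: find a good to swap with
    push_neg at hs
    have hex : ∃ k, k ≠ i0 ∧ y k < xn k := by
      by_contra hno
      push_neg at hno
      have hlt : ∑ i, xn i < ∑ i, y i := by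
        apply Finset.sum_lt_sum
        · intro i _
          rcases eq_or_ne i i0 with rfl | hne
          · omega
          · exact hno i hne
        · exact ⟨i0, mem_univ _, hgt⟩
      have h2' := hyD.1.2
      omega
    obtain ⟨k, hki0, hky⟩ := hex
    -- in the small market, swapping k for i0 is possible, so margin i0 ≤ margin k at pnew
    have hswapxn := bundle_swap hxn.1 (hne := hki0) (hi0 := by omega) (hk := h3) vj pnew
    have hmargle : (vj i0 : ℝ) - pnew i0 ≤ (vj k : ℝ) - pnew k := by
      have := hxn.2 _ hswapxn.1
      rw [hswapxn.2] at this; linarith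
    have hbk : 0 < bnew k := lt_of_lt_of_le (by omega) (hxn.1.1 k)
    have hqk : (vj k : ℝ) - pnew k ≤ (vj k : ℝ) - q k := by
      by_cases hAk : 0 < bnew k ∧ pnew k < p k
      · rw [hqA k hAk.1 hAk.2]
      · rw [hqB k hAk]
        have : ¬ pnew k < p k := fun h => hAk ⟨hbk, h⟩
        push_neg at this
        linarith
    have hswapy := bundle_swap hyD.1 (hne := hki0.symm) (hi0 := by omega)
      (hk := lt_of_lt_of_le hky (le_trans (hxn.1.1 k) (hbb k))) vj q
    have hopt : InDemand b dj vj q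
        (Function.update (Function.update y i0 (y i0 - 1)) k (y k + 1)) := by
      refine ⟨hswapy.1, fun z hz => ?_⟩
      have h4 := hyD.2 z hz
      rw [hswapy.2, hqi0]
      have : (0:ℝ) ≤ ((vj k : ℝ) - q k) - ((vj i0 : ℝ) - pnew i0) := by linarith
      linarith
    have := hymin _ hopt
    have hlt := hΦlt (Function.update (Function.update y i0 (y i0 - 1)) k (y k + 1))
      (by rw [Function.update_of_ne hki0.symm, Function.update_self])
      (fun i hne => by
        rcases eq_or_ne i k with rfl | hnk
        · rw [Function.update_self]
          have : y i + 1 ≤ xn i := hky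
          omega
        · rw [Function.update_of_ne hnk, Function.update_of_ne hne]
          exact le_max_left _ _)
    omega

/-- Counting lemma: the chosen demanded bundles fit within supply `b i` on good `i`. -/
lemma count_le {N : Type*} [Fintype N] (b bnew : Ω → ℕ) (i : Ω) (hpos : 0 < bnew i)
    (hbb : bnew i ≤ b i) (xnew : Ω → N → ℕ) (y : N → Ω → ℕ)
    (hycap : ∀ j, y j i ≤ b i)
    (hprop : ∀ j, xnew i j < bnew i → y j i ≤ xnew i j)
    (hfeas : ∑ j, xnew i j ≤ bnew i) :
    ∑ j, y j i ≤ b i := by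
  classical
  by_cases hT : ∃ j0, xnew i j0 < bnew i → False
  · obtain ⟨j0, hj0⟩ := hT
    have hsat : xnew i j0 = bnew i := by
      have hle : xnew i j0 ≤ bnew i :=
        le_trans (Finset.single_le_sum (fun j _ => Nat.zero_le _) (mem_univ j0)) hfeas
      by_contra hne
      exact hj0 (by omega)
    have hrest : ∀ j, j ≠ j0 → xnew i j = 0 := by
      intro j hj
      have h1 : xnew i j0 + ∑ j' ∈ Finset.univ.erase j0, xnew i j' = ∑ j', xnew i j' :=
        Finset.add_sum_erase _ _ (mem_univ j0)
      have h2 : xnew i j ≤ ∑ j' ∈ Finset.univ.erase j0, xnew i j' :=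
        Finset.single_le_sum (fun j' _ => Nat.zero_le _) (Finset.mem_erase.mpr ⟨hj, mem_univ j⟩)
      omega
    have hyrest : ∀ j, j ≠ j0 → y j i = 0 := by
      intro j hj
      have := hprop j (by rw [hrest j hj]; exact hpos)
      rw [hrest j hj] at this
      omega
    have h1 : y j0 i + ∑ j ∈ Finset.univ.erase j0, y j i = ∑ j, y j i :=
      Finset.add_sum_erase _ (fun j => y j i) (mem_univ j0)
    have h2 : ∑ j ∈ Finset.univ.erase j0, y j i = 0 :=
      Finset.sum_eq_zero (fun j hj => hyrest j (Finset.mem_erase.mp hj).1)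
    have := hycap j0
    omega
  · push_neg at hT
    calc ∑ j, y j i ≤ ∑ j, xnew i j := Finset.sum_le_sum (fun j _ => hprop j (hT j).1)
    _ ≤ b i := le_trans hfeas hbb

lemma sum_two_point {α : Type*} [Fintype α] [DecidableEq α] (f g : α → ℝ) (a c : α)
    (hac : a ≠ c) (h : ∀ i, i ≠ a → i ≠ c → f i = g i) :
    ∑ i, f i = ∑ i, g i + ((f a - g a) + (f c - g c)) := by
  have hca : c ∈ Finset.univ.erase a := Finset.mem_erase.mpr ⟨(Ne.symm hac), mem_univ c⟩
  rw [← Finset.add_sum_erase _ f (mem_univ a), ← Finset.add_sum_erase _ g (mem_univ a),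
    ← Finset.add_sum_erase _ f hca, ← Finset.add_sum_erase _ g hca]
  have : ∑ i ∈ (Finset.univ.erase a).erase c, f i = ∑ i ∈ (Finset.univ.erase a).erase c, g i := by
    apply Finset.sum_congr rfl
    intro i hi
    have h1 := Finset.mem_erase.mp hi
    have h2 := Finset.mem_erase.mp h1.2
    exact h i h2.1 h1.1
  rw [this]; ring

end Aux

section Alloc

variable {Ω N : Type*} [Fintype Ω] [DecidableEq Ω] [Fintype N] [DecidableEq N]
variable (b : Ω → ℕ) (d : N → ℕ) (v : Ω → N → ℕ) (p : Ω → ℝ)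

/-- tie-relation between goods used for the chain argument -/
def StepRel (x : Ω → N → ℕ) (a c : Ω) : Prop :=
  ∃ j, x a j < b a ∧ 0 < x c j ∧ ((v a j : ℝ) - p a = (v c j : ℝ) - p c)

/-- stable and full-sale -/
def SF (x : Ω → N → ℕ) : Prop :=
  Stable b d v p x ∧ ∑ i, ∑ j, x i j = min (∑ i, b i) (∑ j, d j)

/-- revenue -/
noncomputable def Rev (x : Ω → N → ℕ) : ℝ := ∑ i, p i * ((∑ j, x i j : ℕ) : ℝ)

lemma alloc_swap (x : Ω → N → ℕ) (hSF : SF b d v p x) {a c : Ω} {j1 : N}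
    (hcap : x a j1 < b a) (hpos : 0 < x c j1)
    (hmarg : (v a j1 : ℝ) - p a = (v c j1 : ℝ) - p c)
    (hslack : ∑ j, x a j < b a) (hac : a ≠ c) :
    ∃ x', SF b d v p x' ∧ Rev p x' = Rev p x + (p a - p c) ∧
      (∀ i j, i ≠ a → i ≠ c → x' i j = x i j) ∧
      (∀ j, x' c j ≤ x c j) ∧ (∑ j, x' c j = (∑ j, x c j) - 1) := by
  classical
  obtain ⟨⟨hfeas, hdem⟩, hfull⟩ := hSF
  set colB : Ω → ℕ :=
    Function.update (Function.update (fun i' => x i' j1) c (x c j1 - 1)) a (x a j1 + 1) with hcolB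
  have hswap := bundle_swap (hdem j1).1 (hne := (Ne.symm hac)) (hi0 := hpos)
    (hk := hcap) (fun i => v i j1) p
  set x' : Ω → N → ℕ := fun i j => if j = j1 then colB i else x i j with hx'
  have hvalj1 : ∀ i, x' i j1 = colB i := by intro i; rw [hx']; simp
  have hvalne : ∀ i j, j ≠ j1 → x' i j = x i j := by
    intro i j hj; rw [hx']; simp only [if_neg hj]
  have hcola : colB a = x a j1 + 1 := by rw [hcolB]; simp
  have hcolc : colB c = x c j1 - 1 := by
    rw [hcolB, Function.update_of_ne (Ne.symm hac), Function.update_self]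
  have hcolother : ∀ i, i ≠ a → i ≠ c → colB i = x i j1 := by
    intro i hia hic
    rw [hcolB, Function.update_of_ne hia, Function.update_of_ne hic]
  have hcoord : ∀ i j, i ≠ a → i ≠ c → x' i j = x i j := by
    intro i j hia hic
    by_cases hj : j = j1
    · subst hj; rw [hvalj1]; exact hcolother i hia hic
    · exact hvalne i j hj
  have hcolsum : ∀ i, ∑ j, x' i j = colB i + ∑ j ∈ Finset.univ.erase j1, x i j := by
    intro i
    rw [← Finset.add_sum_erase _ (fun j => x' i j) (mem_univ j1), hvalj1]
    congr 1
    exact Finset.sum_congr rfl (fun j hj => hvalne i j (Finset.mem_erase.mp hj).1)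
  have hxsum : ∀ i, ∑ j, x i j = x i j1 + ∑ j ∈ Finset.univ.erase j1, x i j := by
    intro i; exact (Finset.add_sum_erase _ (fun j => x i j) (mem_univ j1)).symm
  have hsuma : ∑ j, x' a j = (∑ j, x a j) + 1 := by
    rw [hcolsum, hcola, hxsum a]; omega
  have hsumc : ∑ j, x' c j = (∑ j, x c j) - 1 := by
    have := hxsum c
    rw [hcolsum, hcolc]; omega
  have hsumother : ∀ i, i ≠ a → i ≠ c → ∑ j, x' i j = ∑ j, x i j := by
    intro i hia hic
    exact Finset.sum_congr rfl (fun j _ => hcoord i j hia hic)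
  have hcle : ∀ j, x' c j ≤ x c j := by
    intro j
    by_cases hj : j = j1
    · subst hj; rw [hvalj1, hcolc]; omega
    · rw [hvalne c j hj]
  have hbundle_eq : ∀ j, j ≠ j1 → (fun i => x' i j) = (fun i => x i j) := by
    intro j hj; funext i; exact hvalne i j hj
  have hbundle_j1 : (fun i => x' i j1) = colB := funext hvalj1
  have hXc : 0 < ∑ j, x c j :=
    lt_of_lt_of_le hpos (Finset.single_le_sum (fun j _ => Nat.zero_le _) (mem_univ j1))
  have hcolsum_eq : ∑ i, colB i = ∑ i, x i j1 := by
    have hgec : x c j1 ≤ ∑ i, x i j1 :=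
      Finset.single_le_sum (f := fun i => x i j1) (fun i _ => Nat.zero_le _) (mem_univ c)
    have hupd_a : Function.update (fun i' => x i' j1) c (x c j1 - 1) a = x a j1 :=
      Function.update_of_ne hac _ _
    rw [hcolB, sum_update_add, sum_update_sub (fun i' => x i' j1) c hpos]
    rw [hupd_a]
    have hpair : x a j1 + x c j1 ≤ ∑ i, x i j1 := by
      rw [← Finset.sum_pair (f := fun i => x i j1) hac]
      exact Finset.sum_le_sum_of_subset (fun t _ => mem_univ t)
    omega
  have hcolsx : ∀ j, ∑ i, x' i j = ∑ i, x i j := by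
    intro j
    by_cases hj : j = j1
    · rw [hj]
      calc ∑ i, x' i j1 = ∑ i, colB i := Finset.sum_congr rfl (fun i _ => hvalj1 i)
      _ = ∑ i, x i j1 := hcolsum_eq
    · exact Finset.sum_congr rfl (fun i _ => hvalne i j hj)
  refine ⟨x', ⟨⟨⟨?_, ?_⟩, ?_⟩, ?_⟩, ?_, hcoord, hcle, hsumc⟩
  · -- supply feasibility
    intro i
    by_cases hia : i = a
    · rw [hia, hsuma]; omega
    by_cases hic : i = c
    · rw [hic, hsumc]; exact le_trans (Nat.sub_le _ _) (hfeas.1 c)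
    · rw [hsumother i hia hic]; exact hfeas.1 i
  · -- buyer feasibility
    intro j
    rw [hcolsx j]; exact hfeas.2 j
  · -- demand
    intro j
    by_cases hj : j = j1
    · rw [hj, hbundle_j1]
      refine ⟨hswap.1, fun z hz => ?_⟩
      have h4 := (hdem j1).2 z hz
      rw [hswap.2]
      have heq : (v a j1 : ℝ) - p a - ((v c j1 : ℝ) - p c) = 0 := by rw [hmarg]; ring
      rw [heq]
      linarith
    · rw [hbundle_eq j hj]; exact hdem j
  · -- full sale
    rw [Finset.sum_comm (f := fun i j => x' i j)]
    rw [show ∑ j, ∑ i, x' i j = ∑ j, ∑ i, x i j from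
      Finset.sum_congr rfl (fun j _ => hcolsx j)]
    rw [← Finset.sum_comm]
    exact hfull
  · -- revenue
    rw [Rev, Rev, sum_two_point (fun i => p i * ((∑ j, x' i j : ℕ) : ℝ))
      (fun i => p i * ((∑ j, x i j : ℕ) : ℝ)) a c hac
      (fun i hia hic => by simp only [hsumother i hia hic])]
    have hXc1 : 1 ≤ ∑ j, x c j := hXc
    have ha1 : (((∑ j, x a j) + 1 : ℕ) : ℝ) = ((∑ j, x a j : ℕ) : ℝ) + 1 := by push_cast; ring
    have hc1 : (((∑ j, x c j) - 1 : ℕ) : ℝ) = ((∑ j, x c j : ℕ) : ℝ) - 1 := by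
      rw [Nat.cast_sub hXc1, Nat.cast_one]
    simp only [hsuma, hsumc, ha1, hc1]
    ring

lemma chain_imp_mem {α : Type*} {r r' : α → α → Prop} :
    ∀ (l : List α) (a : α), (∀ i k, i ∈ a :: l → k ∈ l → r i k → r' i k) →
      List.Chain r a l → List.Chain r' a l := by
  intro l
  induction l with
  | nil => intro a _ _; exact List.Chain.nil
  | cons c cs ih =>
    intro a h hch
    obtain ⟨h1, h2⟩ := List.chain_cons.mp hch
    refine List.chain_cons.mpr ⟨h a c (by simp) (by simp) h1, ?_⟩
    exact ih c (fun i k hi hk hr => h i k (by simp at hi ⊢; tauto) (by simp [hk]) hr) h2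

lemma dedup_chain {α : Type*} [DecidableEq α] {r : α → α → Prop} :
    ∀ (n : ℕ) (l : List α) (a : α), l.length ≤ n → List.Chain r a l →
      ∃ l', List.Chain r a l' ∧
        (a :: l').getLast (List.cons_ne_nil _ _) = (a :: l).getLast (List.cons_ne_nil _ _) ∧
        (a :: l').Nodup ∧ ∀ z ∈ l', z ∈ l := by
  intro n
  induction n with
  | zero =>
    intro l a hlen _
    have : l = [] := List.length_eq_zero_iff.mp (Nat.le_zero.mp hlen)
    subst this
    exact ⟨[], List.Chain.nil, rfl, by simp, by simp⟩
  | succ n ih =>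
    intro l a hlen hch
    by_cases hmem : a ∈ l
    · obtain ⟨l₁, l₂, rfl⟩ := List.append_of_mem hmem
      have hch₂ : List.Chain r a l₂ := (List.isChain_cons_split.mp hch).2
      have hlen₂ : l₂.length ≤ n := by
        simp only [List.length_append, List.length_cons] at hlen
        omega
      obtain ⟨l', h1, h2, h3, h4⟩ := ih l₂ a hlen₂ hch₂
      refine ⟨l', h1, ?_, h3, fun z hz => by simp [h4 z hz]⟩
      exact h2.trans (List.getLast_append_of_ne_nil (l := a :: l₁) (l' := a :: l₂) (by simp) (List.cons_ne_nil _ _)).symm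
    · match l, hch with
      | [], _ => exact ⟨[], List.Chain.nil, rfl, by simp, by simp⟩
      | c :: cs, hch =>
        obtain ⟨h1, h2⟩ := List.chain_cons.mp hch
        have hlen' : cs.length ≤ n := by simp at hlen; omega
        obtain ⟨cs', hc1, hc2, hc3, hc4⟩ := ih cs c hlen' h2
        have hanotc : a ∉ c :: cs' := by
          intro hin
          rcases List.mem_cons.mp hin with rfl | hin'
          · exact hmem (by simp)
          · exact hmem (by simp [hc4 a hin'])
        refine ⟨c :: cs', List.chain_cons.mpr ⟨h1, hc1⟩, ?_, ?_, ?_⟩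
        · rw [List.getLast_cons_cons, List.getLast_cons_cons, hc2]
        · exact List.nodup_cons.mpr ⟨hanotc, hc3⟩
        · intro z hz
          rcases List.mem_cons.mp hz with rfl | hz'
          · simp
          · simp [hc4 z hz']

lemma claimB (l : List Ω) :
    ∀ (a : Ω) (x : Ω → N → ℕ), SF b d v p x → (a :: l).Nodup →
      List.Chain (StepRel b v p x) a l → (∑ j, x a j < b a) →
      p ((a :: l).getLast (List.cons_ne_nil _ _)) = 0 →
      ∃ x', SF b d v p x' ∧ Rev p x + p a ≤ Rev p x' := by
  induction l with
  | nil =>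
    intro a x hx _ _ _ hlast
    simp at hlast
    exact ⟨x, hx, by rw [hlast]; simp⟩
  | cons c cs ih =>
    intro a x hx hnd hch hslack hlast
    obtain ⟨hstep, hch'⟩ := List.chain_cons.mp hch
    obtain ⟨j1, hcap, hpos, hmarg⟩ := hstep
    have hanotmem : a ∉ c :: cs := (List.nodup_cons.mp hnd).1
    have hac : a ≠ c := fun h => hanotmem (h ▸ by simp)
    have hcnotmem : c ∉ cs := (List.nodup_cons.mp (List.nodup_cons.mp hnd).2).1
    obtain ⟨x', hSF', hRev', hkeep, hcle, hsumc⟩ :=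
      alloc_swap b d v p x hx hcap hpos hmarg hslack hac
    have hslack' : ∑ j, x' c j < b c := by
      have h1 := hx.1.1.1 c
      have h2 : 0 < ∑ j, x c j :=
        lt_of_lt_of_le hpos (Finset.single_le_sum (fun j _ => Nat.zero_le _) (mem_univ j1))
      omega
    have hch'' : List.Chain (StepRel b v p x') c cs := by
      apply chain_imp_mem cs c _ hch'
      intro i k hi hk hr
      obtain ⟨j, ha1, ha2, ha3⟩ := hr
      have hknea : k ≠ a := fun h => hanotmem (h ▸ List.mem_cons_of_mem c hk)
      have hknec : k ≠ c := fun h => hcnotmem (h ▸ hk)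
      have hinea : i ≠ a := fun h => hanotmem (h ▸ hi)
      refine ⟨j, ?_, ?_, ha3⟩
      · by_cases hic : i = c
        · subst hic; exact lt_of_le_of_lt (hcle j) ha1
        · rw [hkeep i j hinea hic]; exact ha1
      · by_cases hic : k = c
        · exact absurd hic hknec
        · rw [hkeep k j hknea hic]; exact ha2
    have hlast' : p ((c :: cs).getLast (List.cons_ne_nil _ _)) = 0 := by
      rwa [List.getLast_cons_cons] at hlast
    obtain ⟨x'', hx''SF, hx''Rev⟩ :=
      ih c x' hSF' (List.nodup_cons.mp hnd).2 hch'' hslack' hlast'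
    refine ⟨x'', hx''SF, ?_⟩
    rw [hRev'] at hx''Rev
    linarith

/-- At a minimal Walrasian price vector, there is a stable full-sale allocation selling out
every good with positive price. -/
lemma P1 (hW : Walrasian b d v p) (hmin : ∀ q, Walrasian b d v q → ∀ i, p i ≤ q i) :
    ∃ x, SF b d v p x ∧ ∀ i, 0 < p i → ∑ j, x i j = b i := by
  classical
  set AF : Finset (Ω → N → ℕ) :=
    ((Fintype.piFinset fun _ : Ω => Fintype.piFinset fun _ : N =>
      Finset.range ((∑ i, b i) + 1))).filter (fun x => SF b d v p x) with hAF
  have hmemAF : ∀ x, x ∈ AF ↔ SF b d v p x := by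
    intro x
    rw [hAF, Finset.mem_filter]
    constructor
    · exact fun h => h.2
    · intro h
      refine ⟨?_, h⟩
      rw [Fintype.mem_piFinset]
      intro i
      rw [Fintype.mem_piFinset]
      intro j
      rw [Finset.mem_range, Nat.lt_succ_iff]
      calc x i j ≤ ∑ j', x i j' :=
            Finset.single_le_sum (fun j' _ => Nat.zero_le _) (mem_univ j)
        _ ≤ b i := h.1.1.1 i
        _ ≤ ∑ i', b i' := Finset.single_le_sum (fun i' _ => Nat.zero_le _) (mem_univ i)
  obtain ⟨x0, hx0⟩ := hW.2
  have hAFne : AF.Nonempty := ⟨x0, (hmemAF _).2 ⟨hx0.1, hx0.2⟩⟩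
  obtain ⟨x, hxAF, hxmax⟩ := AF.exists_max_image (Rev p) hAFne
  have hxSF : SF b d v p x := (hmemAF _).1 hxAF
  refine ⟨x, hxSF, ?_⟩
  intro i0 hpi0
  by_contra hne
  have hlt : ∑ j, x i0 j < b i0 := lt_of_le_of_ne (hxSF.1.1.1 i0) hne
  -- all buyers are at their demand caps
  have h1 : ∑ i, ∑ j, x i j < ∑ i, b i :=
    Finset.sum_lt_sum (fun i _ => hxSF.1.1.1 i) ⟨i0, mem_univ _, hlt⟩
  have h2 : min (∑ i, b i) (∑ j, d j) = ∑ j, d j := by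
    have := hxSF.2
    rcases min_le_iff.mp (le_refl (min (∑ i, b i) (∑ j, d j))) with _ | _ <;> omega
  have hfullbuy : ∀ j, ∑ i, x i j = d j := by
    have hsum : ∑ j, ∑ i, x i j = ∑ j, d j := by
      rw [← Finset.sum_comm, hxSF.2, h2]
    intro j
    by_contra hnej
    have : ∑ j, ∑ i, x i j < ∑ j, d j :=
      Finset.sum_lt_sum (fun j _ => hxSF.1.1.2 j)
        ⟨j, mem_univ _, lt_of_le_of_ne (hxSF.1.1.2 j) hnej⟩
    omega
  by_cases hzero : ∃ s, Relation.ReflTransGen (StepRel b v p x) i0 s ∧ p s = 0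
  · -- a zero-priced good is tie-reachable: improve revenue, contradiction
    obtain ⟨s, hreach, hps⟩ := hzero
    obtain ⟨l, hchain, hlast⟩ := List.exists_isChain_cons_of_relationReflTransGen hreach
    obtain ⟨l', hch', hlast', hnd', _⟩ := dedup_chain l.length l i0 (le_refl _) hchain
    obtain ⟨x'', hx''SF, hx''Rev⟩ := claimB b d v p l' i0 x hxSF hnd' hch' hlt
      (by rw [hlast', hlast]; exact hps)
    have := hxmax x'' ((hmemAF _).2 hx''SF)
    linarith
  · -- no zero-priced reachable good: lower prices on the reachable set slightly
    push_neg at hzero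
    set S : Finset Ω := Finset.univ.filter
      (fun i => Relation.ReflTransGen (StepRel b v p x) i0 i) with hS
    have hSiff : ∀ i, i ∈ S ↔ Relation.ReflTransGen (StepRel b v p x) i0 i := by
      intro i; rw [hS, Finset.mem_filter]; simp
    have hi0S : i0 ∈ S := (hSiff i0).2 Relation.ReflTransGen.refl
    have hSpos : ∀ i ∈ S, 0 < p i := fun i hi =>
      lt_of_le_of_ne (hW.1 i) (Ne.symm (hzero i ((hSiff i).1 hi)))
    set T : Finset (Ω × Ω × N) := Finset.univ.filter
      (fun t => t.1 ∈ S ∧ t.2.1 ∉ S ∧ x t.1 t.2.2 < b t.1 ∧ 0 < x t.2.1 t.2.2) with hT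
    set gap : (Ω × Ω × N) → ℝ :=
      fun t => ((v t.2.1 t.2.2 : ℝ) - p t.2.1) - ((v t.1 t.2.2 : ℝ) - p t.1) with hgap
    have hTiff : ∀ t, t ∈ T ↔
        (t.1 ∈ S ∧ t.2.1 ∉ S ∧ x t.1 t.2.2 < b t.1 ∧ 0 < x t.2.1 t.2.2) := by
      intro t; rw [hT, Finset.mem_filter]; simp
    have hgappos : ∀ t ∈ T, 0 < gap t := by
      rintro ⟨i, k, j⟩ ht
      obtain ⟨hiS, hkS, hxib, hxk⟩ := (hTiff _).1 ht
      have hik : k ≠ i := fun h => hkS (h ▸ hiS)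
      have hswap := bundle_swap (hxSF.1.2 j).1 (hne := hik) (hi0 := hxk) (hk := hxib)
        (fun i => v i j) p
      have hle := (hxSF.1.2 j).2 _ hswap.1
      rw [hswap.2] at hle
      have hmono : (v i j : ℝ) - p i ≤ (v k j : ℝ) - p k := by linarith
      rcases lt_or_eq_of_le hmono with hlt' | heq'
      · simpa [hgap] using hlt'
      · exfalso
        apply hkS
        refine (hSiff k).2 (Relation.ReflTransGen.tail ((hSiff i).1 hiS) ?_)
        exact ⟨j, hxib, hxk, heq'⟩
    have hSimgne : (S.image p).Nonempty := ⟨p i0, mem_image_of_mem p hi0S⟩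
    set εp : ℝ := (S.image p).min' hSimgne with hεp
    have hεp_pos : 0 < εp := by
      obtain ⟨i, hi, hval⟩ := Finset.mem_image.mp ((S.image p).min'_mem hSimgne)
      rw [hεp, ← hval] at *
      exact hSpos i hi
    have hεp_le : ∀ i ∈ S, εp ≤ p i := fun i hi =>
      Finset.min'_le _ _ (mem_image_of_mem p hi)
    set ε : ℝ := if hTne : (T.image gap).Nonempty
      then min εp ((T.image gap).min' hTne / 2) else εp with hε
    have hε_pos : 0 < ε := by
      rw [hε]
      split
      · rename_i hTne
        apply lt_min hεp_pos
        obtain ⟨t, ht, hval⟩ := Finset.mem_image.mp ((T.image gap).min'_mem hTne)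
        rw [← hval]
        exact div_pos (hgappos t ht) (by norm_num)
      · exact hεp_pos
    have hε_le_εp : ε ≤ εp := by
      rw [hε]; split
      · exact min_le_left _ _
      · exact le_refl _
    have hε_lt_gap : ∀ t ∈ T, ε < gap t := by
      intro t ht
      have hTne : (T.image gap).Nonempty := ⟨gap t, mem_image_of_mem gap ht⟩
      have hminle : (T.image gap).min' hTne ≤ gap t := Finset.min'_le _ _ (mem_image_of_mem gap ht)
      have hminpos : 0 < (T.image gap).min' hTne := by
        obtain ⟨t', ht', hval⟩ := Finset.mem_image.mp ((T.image gap).min'_mem hTne)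
        rw [← hval]; exact hgappos t' ht'
      have : ε ≤ (T.image gap).min' hTne / 2 := by
        rw [hε]
        split
        · exact min_le_right _ _
        · rename_i hc; exact absurd hTne hc
      linarith
    set q' : Ω → ℝ := fun i => if i ∈ S then p i - ε else p i with hq'
    have hq'S : ∀ i ∈ S, q' i = p i - ε := by intro i hi; rw [hq']; simp [hi]
    have hq'nS : ∀ i, i ∉ S → q' i = p i := by intro i hi; rw [hq']; simp [hi]
    have hq'le : ∀ i, q' i ≤ p i := by
      intro i
      by_cases hi : i ∈ S
      · rw [hq'S i hi]; linarith
      · rw [hq'nS i hi]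
    -- stability of x at q'
    have hstab : ∀ j, InDemand b (d j) (fun i => v i j) q' (fun i => x i j) := by
      intro j
      refine ⟨(hxSF.1.2 j).1, ?_⟩
      obtain ⟨zs, hzsD, hzsmin⟩ := exists_demand_min b (d j) (fun i => v i j) q'
        (fun y => ∑ i, ((y i - x i j) + (x i j - y i)))
      have hle : utility (fun i => v i j) q' zs ≤ utility (fun i => v i j) q' (fun i => x i j) := by
        by_contra hgt
        push_neg at hgt
        by_cases hcase : ∃ i, x i j < zs i
        · obtain ⟨i, hi⟩ := hcase
          have hxib : x i j < b i := lt_of_lt_of_le hi (hzsD.1.1 i)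
          have hkex : ∃ k, zs k < x k j := by
            by_contra hno
            push_neg at hno
            have : ∑ i', x i' j < ∑ i', zs i' :=
              Finset.sum_lt_sum (fun i' _ => hno i') ⟨i, mem_univ _, hi⟩
            have h3 := hzsD.1.2
            have h4 := hfullbuy j
            omega
          obtain ⟨k, hk⟩ := hkex
          have hik : i ≠ k := fun h => by rw [h] at hi; omega
          -- margin comparison at p from stability of x
          have hswx := bundle_swap (hxSF.1.2 j).1 (hne := hik.symm) (hi0 := by omega)
            (hk := hxib) (fun i => v i j) p
          have hlep := (hxSF.1.2 j).2 _ hswx.1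
          rw [hswx.2] at hlep
          have hm : (v i j : ℝ) - p i ≤ (v k j : ℝ) - p k := by linarith
          -- swap zs: remove i, add k
          have hswz := bundle_swap hzsD.1 (hne := hik) (hi0 := by omega)
            (hk := lt_of_lt_of_le hk ((hxSF.1.2 j).1.1 k)) (fun i => v i j) q'
          have hub := hzsD.2 _ hswz.1
          rw [hswz.2] at hub
          -- so margin_q' k − margin_q' i ≤ 0
          have hΔ : ((v k j : ℝ) - q' k) - ((v i j : ℝ) - q' i) ≤ 0 := by linarith
          by_cases hiS : i ∈ S
          · by_cases hkS : k ∈ S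
            · -- both in S : Δ = m_k − m_i ≥ 0 hence = 0, H decreases
              rw [hq'S i hiS, hq'S k hkS] at hΔ
              have hΔ0 : ((v k j : ℝ) - q' k) - ((v i j : ℝ) - q' i) = 0 := by
                rw [hq'S i hiS, hq'S k hkS]; linarith
              have hopt' : InDemand b (d j) (fun i => v i j) q' _ := ⟨hswz.1, fun z hz => by
                have := hzsD.2 z hz
                rw [hswz.2, hΔ0]; linarith⟩
              have hmin' := hzsmin _ hopt'
              have hHlt : (∑ i', ((Function.update (Function.update zs i (zs i - 1)) k (zs k + 1) i' - x i' j)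
                  + (x i' j - Function.update (Function.update zs i (zs i - 1)) k (zs k + 1) i')))
                  < ∑ i', ((zs i' - x i' j) + (x i' j - zs i')) := by
                apply Finset.sum_lt_sum
                · intro t _
                  by_cases hti : t = i
                  · subst hti
                    rw [Function.update_of_ne hik, Function.update_self]
                    omega
                  by_cases htk : t = k
                  · subst htk
                    rw [Function.update_self]
                    omega
                  · rw [Function.update_of_ne htk, Function.update_of_ne hti]
                · refine ⟨i, mem_univ _, ?_⟩
                  rw [Function.update_of_ne hik, Function.update_self]
                  omega
              omega
            · -- i ∈ S, k ∉ S: strict gap, contradiction with hΔ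
              have htT : (i, k, j) ∈ T := (hTiff _).2 ⟨hiS, hkS, hxib, show 0 < x k j by omega⟩
              have := hε_lt_gap _ htT
              rw [hgap] at this
              rw [hq'S i hiS, hq'nS k hkS] at hΔ
              simp only at this hΔ
              linarith
          · by_cases hkS : k ∈ S
            · -- i ∉ S, k ∈ S : Δ = m_k − m_i + ε > 0, contra
              rw [hq'nS i hiS, hq'S k hkS] at hΔ
              linarith
            · -- both out: Δ = m_k − m_i ≥ 0, hence 0, H decreases
              rw [hq'nS i hiS, hq'nS k hkS] at hΔ
              have hΔ0 : ((v k j : ℝ) - q' k) - ((v i j : ℝ) - q' i) = 0 := by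
                rw [hq'nS i hiS, hq'nS k hkS]; linarith
              have hopt' : InDemand b (d j) (fun i => v i j) q' _ := ⟨hswz.1, fun z hz => by
                have := hzsD.2 z hz
                rw [hswz.2, hΔ0]; linarith⟩
              have hmin' := hzsmin _ hopt'
              have hHlt : (∑ i', ((Function.update (Function.update zs i (zs i - 1)) k (zs k + 1) i' - x i' j)
                  + (x i' j - Function.update (Function.update zs i (zs i - 1)) k (zs k + 1) i')))
                  < ∑ i', ((zs i' - x i' j) + (x i' j - zs i')) := by
                apply Finset.sum_lt_sum
                · intro t _
                  by_cases hti : t = i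
                  · subst hti
                    rw [Function.update_of_ne hik, Function.update_self]
                    omega
                  by_cases htk : t = k
                  · subst htk
                    rw [Function.update_self]
                    omega
                  · rw [Function.update_of_ne htk, Function.update_of_ne hti]
                · refine ⟨i, mem_univ _, ?_⟩
                  rw [Function.update_of_ne hik, Function.update_self]
                  omega
              omega
        · push_neg at hcase
          by_cases hstrict : ∃ i1, zs i1 < x i1 j
          · obtain ⟨i1, hi1⟩ := hstrict
            -- marginal value of held good nonnegative at p
            have hrem := bundle_remove (hxSF.1.2 j).1 i1 (by omega) (fun i => v i j) p
            have hlep := (hxSF.1.2 j).2 _ hrem.1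
            rw [hrem.2] at hlep
            have hm1 : (0:ℝ) ≤ (v i1 j : ℝ) - p i1 := by linarith
            have hsumlt : ∑ i', zs i' < d j := by
              have : ∑ i', zs i' < ∑ i', x i' j :=
                Finset.sum_lt_sum (fun i' _ => hcase i') ⟨i1, mem_univ _, hi1⟩
              have := hfullbuy j
              omega
            have hadd := bundle_add hzsD.1 i1 (lt_of_lt_of_le hi1 ((hxSF.1.2 j).1.1 i1))
              hsumlt (fun i => v i j) q'
            have hub := hzsD.2 _ hadd.1
            rw [hadd.2] at hub
            have hq'i1 : (0:ℝ) ≤ (v i1 j : ℝ) - q' i1 := by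
              have := hq'le i1; linarith
            have hΔ0 : (v i1 j : ℝ) - q' i1 = 0 := by linarith
            have hopt' : InDemand b (d j) (fun i => v i j) q' _ := ⟨hadd.1, fun z hz => by
              have := hzsD.2 z hz
              rw [hadd.2, hΔ0]; linarith⟩
            have hmin' := hzsmin _ hopt'
            have hHlt : (∑ i', ((Function.update zs i1 (zs i1 + 1) i' - x i' j)
                + (x i' j - Function.update zs i1 (zs i1 + 1) i')))
                < ∑ i', ((zs i' - x i' j) + (x i' j - zs i')) := by
              apply Finset.sum_lt_sum
              · intro t _
                by_cases hti : t = i1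
                · subst hti
                  rw [Function.update_self]
                  omega
                · rw [Function.update_of_ne hti]
              · refine ⟨i1, mem_univ _, ?_⟩
                rw [Function.update_self]
                omega
            omega
          · push_neg at hstrict
            have : zs = fun i => x i j := by
              funext i
              exact le_antisymm (hcase i) (hstrict i)
            rw [this] at hgt
            exact absurd hgt (lt_irrefl _)
      intro z hz
      exact le_trans (hzsD.2 z hz) hle
    -- q' is Walrasian
    have hW' : Walrasian b d v q' := by
      refine ⟨?_, x, ⟨hxSF.1.1, hstab⟩, hxSF.2⟩
      intro i
      by_cases hi : i ∈ S
      · rw [hq'S i hi]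
        have := hεp_le i hi
        linarith
      · rw [hq'nS i hi]; exact hW.1 i
    have := hmin q' hW' i0
    rw [hq'S i0 hi0S] at this
    linarith

end Alloc

/-- monotonicity of buyer-optimal Walrasian prices in the supply. -/
theorem min_walrasian_prices_monotone_in_supply
    {Ω N : Type*} [Fintype Ω] [Fintype N]
    (v : Ω → N → ℕ) (b bnew : Ω → ℕ) (d : N → ℕ)
    (hb : ∀ i, bnew i ≤ b i)
    (p pnew : Ω → ℝ)
    (hp : MinWalrasian b d v p) (hpnew : MinWalrasian bnew d v pnew) :
    ∀ i, 0 < bnew i → p i ≤ pnew i := by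
  classical
  obtain ⟨hpW, hpmin⟩ := hp
  obtain ⟨hpnW, _⟩ := hpnew
  set q : Ω → ℝ := fun i => if 0 < bnew i ∧ pnew i < p i then pnew i else p i with hqdef
  have hqA : ∀ i, 0 < bnew i → pnew i < p i → q i = pnew i := by
    intro i h1 h2; rw [hqdef]; simp [h1, h2]
  have hqB : ∀ i, ¬(0 < bnew i ∧ pnew i < p i) → q i = p i := by
    intro i h1; rw [hqdef]; simp only [if_neg h1]
  obtain ⟨x, hxSF, hxsold⟩ := P1 b d v p hpW hpmin
  obtain ⟨xnew, hxnew, _⟩ := hpnW.2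
  have hchoice : ∀ j, ∃ y, InDemand b (d j) (fun i => v i j) q y ∧
      ∀ i, 0 < bnew i → pnew i < p i → xnew i j < bnew i → y i ≤ xnew i j :=
    fun j => lemC b bnew p pnew q (d j) (fun i => v i j) (fun i => xnew i j)
      hb hqA hqB (hxnew.2 j)
  choose y hyD hyP using hchoice
  have hcount : ∀ i, 0 < bnew i → pnew i < p i → ∑ j, y j i ≤ b i := by
    intro i h1 h2
    exact count_le b bnew i h1 (hb i) xnew y (fun j => (hyD j).1.1 i)
      (fun j hlt => hyP j i h1 h2 hlt) (hxnew.1.1 i)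
  have hutil : ∀ (vj : Ω → ℕ) (z : Ω → ℕ),
      utility vj q z = utility vj p z + ∑ i, (p i - q i) * (z i : ℝ) := by
    intro vj z
    rw [utility, utility, ← Finset.sum_add_distrib]
    exact Finset.sum_congr rfl (fun i _ => by ring)
  have hppos : ∀ i, 0 < bnew i → pnew i < p i → 0 < p i :=
    fun i h1 h2 => lt_of_le_of_lt (hpnW.1 i) h2
  have key : ∑ j, utility (fun i => v i j) q (y j)
      ≤ ∑ j, utility (fun i => v i j) q (fun i => x i j) := by
    have e1 : ∀ j, utility (fun i => v i j) q (y j)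
        ≤ utility (fun i => v i j) p (fun i => x i j) + ∑ i, (p i - q i) * (y j i : ℝ) := by
      intro j
      rw [hutil]
      have := (hxSF.1.2 j).2 (y j) (hyD j).1
      linarith
    have e2 : ∀ j, utility (fun i => v i j) q (fun i => x i j)
        = utility (fun i => v i j) p (fun i => x i j) + ∑ i, (p i - q i) * (x i j : ℝ) :=
      fun j => hutil _ _
    have e3 : ∑ j, ∑ i, (p i - q i) * (y j i : ℝ) ≤ ∑ j, ∑ i, (p i - q i) * (x i j : ℝ) := by
      rw [Finset.sum_comm, Finset.sum_comm (f := fun j i => (p i - q i) * (x i j : ℝ))]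
      apply Finset.sum_le_sum
      intro i _
      by_cases hAi : 0 < bnew i ∧ pnew i < p i
      · have hcoef : 0 ≤ p i - q i := by
          rw [hqA i hAi.1 hAi.2]; linarith [hAi.2]
        have hyx : (∑ j, (y j i : ℝ)) ≤ ∑ j, (x i j : ℝ) := by
          have h4 : ∑ j, y j i ≤ ∑ j, x i j := by
            rw [hxsold i (hppos i hAi.1 hAi.2)]
            exact hcount i hAi.1 hAi.2
          exact_mod_cast h4
        calc ∑ j, (p i - q i) * (y j i : ℝ) = (p i - q i) * ∑ j, (y j i : ℝ) := by
              rw [Finset.mul_sum]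
          _ ≤ (p i - q i) * ∑ j, (x i j : ℝ) := by
              exact mul_le_mul_of_nonneg_left hyx hcoef
          _ = ∑ j, (p i - q i) * (x i j : ℝ) := by rw [Finset.mul_sum]
      · have hz : p i - q i = 0 := by rw [hqB i hAi]; ring
        simp [hz]
    calc ∑ j, utility (fun i => v i j) q (y j)
        ≤ ∑ j, (utility (fun i => v i j) p (fun i => x i j)
            + ∑ i, (p i - q i) * (y j i : ℝ)) := Finset.sum_le_sum (fun j _ => e1 j)
      _ = ∑ j, utility (fun i => v i j) p (fun i => x i j)
            + ∑ j, ∑ i, (p i - q i) * (y j i : ℝ) := Finset.sum_add_distrib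
      _ ≤ ∑ j, utility (fun i => v i j) p (fun i => x i j)
            + ∑ j, ∑ i, (p i - q i) * (x i j : ℝ) := by linarith
      _ = ∑ j, utility (fun i => v i j) q (fun i => x i j) := by
          rw [← Finset.sum_add_distrib]
          exact Finset.sum_congr rfl (fun j _ => (e2 j).symm)
  have hptwise : ∀ j, utility (fun i => v i j) q (fun i => x i j)
      ≤ utility (fun i => v i j) q (y j) :=
    fun j => (hyD j).2 (fun i => x i j) (hxSF.1.2 j).1
  have heq : ∀ j, utility (fun i => v i j) q (fun i => x i j)
      = utility (fun i => v i j) q (y j) := by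
    by_contra hcon
    push_neg at hcon
    obtain ⟨j0, hj0⟩ := hcon
    have : ∑ j, utility (fun i => v i j) q (fun i => x i j)
        < ∑ j, utility (fun i => v i j) q (y j) :=
      Finset.sum_lt_sum (fun j _ => hptwise j)
        ⟨j0, mem_univ _, lt_of_le_of_ne (hptwise j0) hj0⟩
    linarith
  have hstabq : ∀ j, InDemand b (d j) (fun i => v i j) q (fun i => x i j) := by
    intro j
    refine ⟨(hxSF.1.2 j).1, fun z hz => ?_⟩
    rw [heq j]
    exact (hyD j).2 z hz
  have hqW : Walrasian b d v q := by
    refine ⟨?_, x, ⟨hxSF.1.1, hstabq⟩, hxSF.2⟩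
    intro i
    by_cases hAi : 0 < bnew i ∧ pnew i < p i
    · rw [hqA i hAi.1 hAi.2]; exact hpnW.1 i
    · rw [hqB i hAi]; exact hpW.1 i
  intro i hbpos
  by_contra hcon
  push_neg at hcon
  have := hpmin q hqW i
  rw [hqA i hbpos hcon] at this
  linarith
end

section
/- Hall-type characterization of competitive prices: a price vector p is competitive if and only if ∑_{i∈I} b i ≥ d_p(I) for every subset I ⊆ Ω. -/
open Finset

section TierDefs

variable {Ω N : Type*}

/-- The set `P` of positive payoffs `u i`. -/
noncomputable def posPayoffs [Fintype Ω] (u : Ω → ℝ) : Finset ℝ :=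
  (Finset.univ.image u).filter (fun t => 0 < t)

/-- The threshold payoff `θ_j(p)`: the largest positive payoff value `t` such that the
supply of items with payoff at least `t` covers the demand, if it exists; otherwise the
minimum positive payoff value (and junk value `0` if there is no positive payoff). -/
noncomputable def theta [Fintype Ω] (b : Ω → ℕ) (dj : ℕ) (u : Ω → ℝ) : ℝ :=
  if hQ : ((posPayoffs u).filter
      (fun t => dj ≤ ∑ i ∈ Finset.univ.filter (fun i => t ≤ u i), b i)).Nonempty then
    ((posPayoffs u).filter
      (fun t => dj ≤ ∑ i ∈ Finset.univ.filter (fun i => t ≤ u i), b i)).max' hQ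
  else if hP : (posPayoffs u).Nonempty then (posPayoffs u).min' hP
  else 0

/-- `Ω'_j(p)`: objects with payoff strictly above the threshold. -/
noncomputable def OmegaP [Fintype Ω] (b : Ω → ℕ) (dj : ℕ) (u : Ω → ℝ) : Finset Ω :=
  if dj = 0 ∨ posPayoffs u = ∅ then ∅
  else Finset.univ.filter (fun i => theta b dj u < u i)

/-- `Ω''_j(p)`: objects with payoff equal to the threshold. -/
noncomputable def OmegaPP [Fintype Ω] (b : Ω → ℕ) (dj : ℕ) (u : Ω → ℝ) : Finset Ω :=
  if dj = 0 ∨ posPayoffs u = ∅ then ∅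
  else Finset.univ.filter (fun i => u i = theta b dj u)

/-- `Ω'''_j(p)`: objects with payoff zero. -/
noncomputable def OmegaPPP [Fintype Ω] (u : Ω → ℝ) : Finset Ω :=
  Finset.univ.filter (fun i => u i = 0)

/-- `d'_j(p)`. -/
noncomputable def dPr [Fintype Ω] (b : Ω → ℕ) (dj : ℕ) (u : Ω → ℝ) : ℕ :=
  ∑ i ∈ OmegaP b dj u, b i

/-- `d''_j(p)`. -/
noncomputable def dPPr [Fintype Ω] (b : Ω → ℕ) (dj : ℕ) (u : Ω → ℝ) : ℕ :=
  min (∑ i ∈ OmegaPP b dj u, b i) (dj - dPr b dj u)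

/-- Payoff function of buyer `j` at prices `p`. -/
noncomputable def payoff (v : Ω → N → ℕ) (p : Ω → ℝ) (j : N) (i : Ω) : ℝ :=
  (v i j : ℝ) - p i

/-- `d_p(I)`: total demand that must be served from the item set `I`
(here `a - b` is truncated subtraction on `ℕ`, i.e. `max (0, a - b)`). -/
noncomputable def overDemand [Fintype Ω] [Fintype N] [DecidableEq Ω] (b : Ω → ℕ)
    (d : N → ℕ) (v : Ω → N → ℕ) (p : Ω → ℝ) (I : Finset Ω) : ℕ :=
  ∑ j : N,
    ((∑ i ∈ OmegaP b (d j) (payoff v p j) ∩ I, b i) +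
      (dPPr b (d j) (payoff v p j) -
        ∑ i ∈ OmegaPP b (d j) (payoff v p j) \ I, min (b i) (dPPr b (d j) (payoff v p j))))

end TierDefs
section Struct
set_option linter.unusedSectionVars false
variable {Ω : Type*} [Fintype Ω] [DecidableEq Ω]

noncomputable def posS (u : Ω → ℝ) : Finset Ω := Finset.univ.filter (fun i => 0 < u i)

noncomputable def coverS (b : Ω → ℕ) (u : Ω → ℝ) (t : ℝ) : ℕ :=
  ∑ i ∈ Finset.univ.filter (fun i => t ≤ u i), b i

variable (b : Ω → ℕ) (m : ℕ) (u : Ω → ℝ)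

lemma theta_mem (hP : (posPayoffs u).Nonempty) : theta b m u ∈ posPayoffs u := by
  unfold theta
  split
  · next hQ => exact Finset.mem_of_mem_filter _ (Finset.max'_mem _ hQ)
  · exact Finset.min'_mem _ hP

lemma theta_pos (hP : (posPayoffs u).Nonempty) : 0 < theta b m u := by
  have := theta_mem b m u hP
  simp only [posPayoffs, Finset.mem_filter] at this
  exact this.2

lemma omegaP_eq (hm : m ≠ 0) (hP : (posPayoffs u).Nonempty) :
    OmegaP b m u = Finset.univ.filter (fun i => theta b m u < u i) := by
  rw [OmegaP, if_neg]
  push_neg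
  exact ⟨hm, hP⟩

lemma omegaPP_eq (hm : m ≠ 0) (hP : (posPayoffs u).Nonempty) :
    OmegaPP b m u = Finset.univ.filter (fun i => u i = theta b m u) := by
  rw [OmegaPP, if_neg]
  push_neg
  exact ⟨hm, hP⟩

lemma cover_split (hm : m ≠ 0) (hP : (posPayoffs u).Nonempty) :
    coverS b u (theta b m u) = dPr b m u + ∑ i ∈ OmegaPP b m u, b i := by
  rw [dPr, omegaP_eq b m u hm hP, omegaPP_eq b m u hm hP, coverS]
  rw [← Finset.sum_union]
  · congr 1
    ext i
    simp only [Finset.mem_filter, Finset.mem_union, Finset.mem_univ, true_and]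
    constructor
    · intro h
      rcases lt_or_eq_of_le h with h | h
      · exact Or.inl h
      · exact Or.inr h.symm
    · rintro (h | h)
      · exact le_of_lt h
      · exact le_of_eq h.symm
  · rw [Finset.disjoint_filter]
    intro i _ hlt heq
    exact absurd heq (ne_of_gt hlt)

lemma struct_main (hm : m ≠ 0) (hP : (posPayoffs u).Nonempty) :
    dPr b m u + dPPr b m u = min m (∑ i ∈ posS u, b i) ∧
    dPPr b m u ≤ ∑ i ∈ OmegaPP b m u, b i ∧
    dPr b m u < m := by
  set θ := theta b m u with hθdef
  have hθpos := theta_pos b m u hP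
  have hsplit := cover_split b m u hm hP
  rw [← hθdef] at hsplit
  have hdlt : dPr b m u < m := by
    by_contra h
    push_neg at h
    -- m ≤ dPr
    have hTne : (Finset.univ.filter (fun i => θ < u i)).Nonempty := by
      rw [← Finset.card_pos]
      by_contra hc
      push_neg at hc
      interval_cases h' : (Finset.univ.filter (fun i => θ < u i)).card
      have : dPr b m u = 0 := by
        rw [dPr, omegaP_eq b m u hm hP, Finset.card_eq_zero.mp h', Finset.sum_empty]
      omega
    have hIne : ((Finset.univ.filter (fun i => θ < u i)).image u).Nonempty :=
      hTne.image u
    obtain ⟨i0, hi0, hui0⟩ := Finset.mem_image.mp (Finset.min'_mem _ hIne)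
    have hi0' : θ < u i0 := (Finset.mem_filter.mp hi0).2
    have ht0P : u i0 ∈ posPayoffs u := by
      rw [posPayoffs, Finset.mem_filter]
      exact ⟨Finset.mem_image.mpr ⟨i0, Finset.mem_univ i0, rfl⟩, lt_trans hθpos hi0'⟩
    have hcov : m ≤ ∑ i ∈ Finset.univ.filter (fun i => u i0 ≤ u i), b i := by
      have h1 : dPr b m u ≤ ∑ i ∈ Finset.univ.filter (fun i => u i0 ≤ u i), b i := by
        rw [dPr, omegaP_eq b m u hm hP]
        refine Finset.sum_le_sum_of_subset ?_
        intro i hi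
        have hi2 := hi
        rw [Finset.mem_filter] at hi ⊢
        refine ⟨hi.1, ?_⟩
        rw [hui0]
        exact Finset.min'_le _ _ (Finset.mem_image.mpr ⟨i, hi2, rfl⟩)
      omega
    have hQne : ((posPayoffs u).filter
        (fun t => m ≤ ∑ i ∈ Finset.univ.filter (fun i => t ≤ u i), b i)).Nonempty :=
      ⟨u i0, Finset.mem_filter.mpr ⟨ht0P, hcov⟩⟩
    have : u i0 ≤ θ := by
      rw [hθdef, theta, dif_pos hQne]
      exact Finset.le_max' _ _ (Finset.mem_filter.mpr ⟨ht0P, hcov⟩)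
    exact absurd this (not_le.mpr hi0')
  by_cases hQ : ((posPayoffs u).filter
      (fun t => m ≤ ∑ i ∈ Finset.univ.filter (fun i => t ≤ u i), b i)).Nonempty
  · -- coverage case
    have hθQ : θ ∈ (posPayoffs u).filter
        (fun t => m ≤ ∑ i ∈ Finset.univ.filter (fun i => t ≤ u i), b i) := by
      rw [hθdef, theta, dif_pos hQ]
      exact Finset.max'_mem _ hQ
    have hcovθ : m ≤ coverS b u θ := (Finset.mem_filter.mp hθQ).2
    have hPPge : m - dPr b m u ≤ ∑ i ∈ OmegaPP b m u, b i := by omega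
    have hd'' : dPPr b m u = m - dPr b m u := by
      rw [dPPr]; omega
    have hSge : m ≤ ∑ i ∈ posS u, b i := by
      refine le_trans hcovθ (Finset.sum_le_sum_of_subset ?_)
      intro i hi
      rw [Finset.mem_filter] at hi
      simp only [posS, Finset.mem_filter]
      exact ⟨hi.1, lt_of_lt_of_le hθpos hi.2⟩
    refine ⟨?_, by omega, hdlt⟩
    rw [hd'', min_eq_left hSge]
    omega
  · -- no coverage
    have hall : ∀ t ∈ posPayoffs u, coverS b u t < m := by
      intro t ht
      by_contra h
      push_neg at h
      exact hQ ⟨t, Finset.mem_filter.mpr ⟨ht, h⟩⟩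
    have hposeq : posS u = Finset.univ.filter (fun i => θ ≤ u i) := by
      ext i
      simp only [posS, Finset.mem_filter, Finset.mem_univ, true_and]
      constructor
      · intro h
        have hmem : u i ∈ posPayoffs u := by
          rw [posPayoffs, Finset.mem_filter]
          exact ⟨Finset.mem_image.mpr ⟨i, Finset.mem_univ i, rfl⟩, h⟩
        rw [hθdef, theta, dif_neg hQ, dif_pos hP]
        exact Finset.min'_le _ _ hmem
      · intro h; exact lt_of_lt_of_le hθpos h
    have hS : ∑ i ∈ posS u, b i = coverS b u θ := by rw [hposeq, coverS]
    have hSlt : ∑ i ∈ posS u, b i < m := by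
      rw [hS]; exact hall θ (theta_mem b m u hP)
    have hd'' : dPPr b m u = ∑ i ∈ OmegaPP b m u, b i := by
      rw [dPPr, min_eq_left]; omega
    refine ⟨?_, by omega, hdlt⟩
    rw [hd'', min_eq_right (le_of_lt hSlt)]
    omega

end Struct
section Demand
set_option linter.unusedSectionVars false
variable {Ω : Type*} [Fintype Ω] [DecidableEq Ω] (b : Ω → ℕ) (m : ℕ) (u : Ω → ℝ)

lemma mem_omegaP_iff (hm : m ≠ 0) (hP : (posPayoffs u).Nonempty) {i : Ω} :
    i ∈ OmegaP b m u ↔ theta b m u < u i := by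
  rw [omegaP_eq b m u hm hP, Finset.mem_filter]
  simp

lemma mem_omegaPP_iff (hm : m ≠ 0) (hP : (posPayoffs u).Nonempty) {i : Ω} :
    i ∈ OmegaPP b m u ↔ u i = theta b m u := by
  rw [omegaPP_eq b m u hm hP, Finset.mem_filter]
  simp

lemma omegaP_subset_posS (hm : m ≠ 0) (hP : (posPayoffs u).Nonempty) :
    OmegaP b m u ⊆ posS u := by
  intro i hi
  rw [mem_omegaP_iff b m u hm hP] at hi
  simp only [posS, Finset.mem_filter, Finset.mem_univ, true_and]
  exact lt_trans (theta_pos b m u hP) hi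

lemma omegaP_disj_omegaPP (hm : m ≠ 0) (hP : (posPayoffs u).Nonempty) :
    Disjoint (OmegaP b m u) (OmegaPP b m u) := by
  rw [Finset.disjoint_left]
  intro i hi1 hi2
  rw [mem_omegaP_iff b m u hm hP] at hi1
  rw [mem_omegaPP_iff b m u hm hP] at hi2
  exact absurd hi2 (ne_of_gt hi1)

/-- Degenerate buyers have `dPPr = 0`. -/
lemma dPPr_degenerate (h : m = 0 ∨ posPayoffs u = ∅) : dPPr b m u = 0 := by
  have h2 : OmegaPP b m u = ∅ := by rw [OmegaPP, if_pos h]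
  rw [dPPr, h2, Finset.sum_empty]
  exact Nat.min_eq_left (Nat.zero_le _)

lemma omegaP_degenerate (h : m = 0 ∨ posPayoffs u = ∅) : OmegaP b m u = ∅ := by
  rw [OmegaP, if_pos h]

lemma omegaPP_degenerate (h : m = 0 ∨ posPayoffs u = ∅) : OmegaPP b m u = ∅ := by
  rw [OmegaPP, if_pos h]

/-- Any "canonical-like" bundle is optimal. -/
lemma canonical_utility_ge
    (y : Ω → ℕ) (hy : ∀ i, y i ≤ b i) (hysum : ∑ i, y i ≤ m)
    (hyP : ∀ i ∈ OmegaP b m u, y i = b i)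
    (hyPP : ∑ i ∈ OmegaPP b m u, y i = dPPr b m u)
    (hsupp : ∀ i, y i ≠ 0 → i ∈ OmegaP b m u ∨ i ∈ OmegaPP b m u ∨ u i = 0)
    (z : Ω → ℕ) (hz : ∀ i, z i ≤ b i) (hzsum : ∑ i, z i ≤ m) :
    ∑ i, u i * (z i : ℝ) ≤ ∑ i, u i * (y i : ℝ) := by
  by_cases hdeg : m = 0 ∨ posPayoffs u = ∅
  · -- degenerate: RHS = 0, LHS ≤ 0
    have hyval : ∑ i, u i * (y i : ℝ) = 0 := by
      refine Finset.sum_eq_zero ?_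
      intro i _
      by_cases h0 : y i = 0
      · rw [h0]; simp
      · rcases hsupp i h0 with h | h | h
        · rw [omegaP_degenerate b m u hdeg] at h; exact absurd h (Finset.notMem_empty i)
        · rw [omegaPP_degenerate b m u hdeg] at h; exact absurd h (Finset.notMem_empty i)
        · rw [h]; ring
    rw [hyval]
    rcases hdeg with h | h
    · -- m = 0 forces z = 0
      have hz0 : ∀ i ∈ Finset.univ, z i = 0 := by
        intro i _
        have : ∑ i, z i = 0 := Nat.le_zero.mp (h ▸ hzsum)
        exact Finset.sum_eq_zero_iff.mp this i (Finset.mem_univ i)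
      refine le_of_eq (Finset.sum_eq_zero ?_)
      intro i hi
      rw [hz0 i hi]; simp
    · -- no positive payoffs: every u i ≤ 0
      refine Finset.sum_nonpos ?_
      intro i _
      have hui : u i ≤ 0 := by
        by_contra hc
        push_neg at hc
        have : u i ∈ posPayoffs u := by
          rw [posPayoffs, Finset.mem_filter]
          exact ⟨Finset.mem_image.mpr ⟨i, Finset.mem_univ i, rfl⟩, hc⟩
        rw [h] at this
        exact Finset.notMem_empty _ this
      exact mul_nonpos_of_nonpos_of_nonneg hui (Nat.cast_nonneg _)
  · push_neg at hdeg
    obtain ⟨hm, hPne⟩ := hdeg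
    have hP : (posPayoffs u).Nonempty := hPne
    set θ := theta b m u with hθdef
    have hθpos : 0 < θ := theta_pos b m u hP
    obtain ⟨hmin, hPPle, hdlt⟩ := struct_main b m u hm hP
    set Ω₁ := OmegaP b m u with hΩ₁
    set Ω₂ := OmegaPP b m u with hΩ₂
    set Pos := posS u with hPos
    have hsub1 : Ω₁ ⊆ Pos := omegaP_subset_posS b m u hm hP
    have hmemP : ∀ i, i ∈ Ω₁ ↔ θ < u i := fun i => mem_omegaP_iff b m u hm hP
    have hmemPP : ∀ i, i ∈ Ω₂ ↔ u i = θ := fun i => mem_omegaPP_iff b m u hm hP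
    have hmemPos : ∀ i, i ∈ Pos ↔ 0 < u i := by
      intro i
      simp [hPos, posS]
    -- value of y
    have hyval : ∑ i, u i * (y i : ℝ) =
        (∑ i ∈ Ω₁, u i * (b i : ℝ)) + θ * (dPPr b m u : ℝ) := by
      rw [← Finset.sum_sdiff (Finset.subset_univ Ω₁)]
      have e1 : ∑ i ∈ Finset.univ \ Ω₁, u i * (y i : ℝ) = ∑ i ∈ Ω₂, u i * (y i : ℝ) := by
        refine (Finset.sum_subset ?_ ?_).symm
        · intro i hi
          rw [Finset.mem_sdiff]
          refine ⟨Finset.mem_univ i, ?_⟩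
          exact Finset.disjoint_right.mp (omegaP_disj_omegaPP b m u hm hP) hi
        · intro i hi hni
          rw [Finset.mem_sdiff] at hi
          by_cases h0 : y i = 0
          · rw [h0]; simp
          · rcases hsupp i h0 with h | h | h
            · exact absurd h hi.2
            · exact absurd h hni
            · rw [h]; ring
      have e2 : ∑ i ∈ Ω₂, u i * (y i : ℝ) = θ * (dPPr b m u : ℝ) := by
        rw [Finset.sum_congr rfl (fun i hi => by rw [(hmemPP i).mp hi]), ← Finset.mul_sum,
          ← Nat.cast_sum, hyPP]
      have e3 : ∑ i ∈ Ω₁, u i * (y i : ℝ) = ∑ i ∈ Ω₁, u i * (b i : ℝ) := by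
        refine Finset.sum_congr rfl ?_
        intro i hi
        rw [hyP i hi]
      rw [e1, e2, e3]
      ring
    -- bound for z
    have hz1 : ∑ i, u i * (z i : ℝ) ≤ ∑ i ∈ Pos, u i * (z i : ℝ) := by
      rw [← Finset.sum_sdiff (Finset.subset_univ Pos)]
      have : ∑ i ∈ Finset.univ \ Pos, u i * (z i : ℝ) ≤ 0 := by
        refine Finset.sum_nonpos ?_
        intro i hi
        rw [Finset.mem_sdiff] at hi
        have : ¬ (0 < u i) := fun hc => hi.2 ((hmemPos i).mpr hc)
        exact mul_nonpos_of_nonpos_of_nonneg (not_lt.mp this) (Nat.cast_nonneg _)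
      linarith
    have hz2 : ∑ i ∈ Pos, u i * (z i : ℝ) ≤
        (∑ i ∈ Ω₁, (u i - θ) * (b i : ℝ)) + θ * (∑ i ∈ Pos, (z i : ℝ)) := by
      rw [← Finset.sum_sdiff hsub1, ← Finset.sum_sdiff hsub1]
      have e4 : ∑ i ∈ Pos \ Ω₁, u i * (z i : ℝ) ≤ ∑ i ∈ Pos \ Ω₁, θ * (z i : ℝ) := by
        refine Finset.sum_le_sum ?_
        intro i hi
        rw [Finset.mem_sdiff] at hi
        have : u i ≤ θ := not_lt.mp (fun hc => hi.2 ((hmemP i).mpr hc))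
        exact mul_le_mul_of_nonneg_right this (Nat.cast_nonneg _)
      have e5 : ∑ i ∈ Ω₁, u i * (z i : ℝ) ≤
          ∑ i ∈ Ω₁, ((u i - θ) * (b i : ℝ) + θ * (z i : ℝ)) := by
        refine Finset.sum_le_sum ?_
        intro i hi
        have h1 : θ < u i := (hmemP i).mp hi
        have h2 : (z i : ℝ) ≤ (b i : ℝ) := Nat.cast_le.mpr (hz i)
        have h3 : (0:ℝ) ≤ z i := Nat.cast_nonneg _
        nlinarith
      rw [Finset.sum_add_distrib] at e5
      rw [mul_add, Finset.mul_sum, Finset.mul_sum]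
      linarith
    have hz3 : (∑ i ∈ Pos, (z i : ℝ)) ≤ ((dPr b m u + dPPr b m u : ℕ) : ℝ) := by
      rw [← Nat.cast_sum]
      rw [Nat.cast_le, hmin]
      refine le_min ?_ ?_
      · exact le_trans (Finset.sum_le_sum_of_subset (Finset.subset_univ Pos)) hzsum
      · exact Finset.sum_le_sum (fun i _ => hz i)
    have hz4 : θ * (∑ i ∈ Pos, (z i : ℝ)) ≤ θ * ((dPr b m u + dPPr b m u : ℕ) : ℝ) :=
      mul_le_mul_of_nonneg_left hz3 (le_of_lt hθpos)
    have hfin : (∑ i ∈ Ω₁, (u i - θ) * (b i : ℝ)) + θ * ((dPr b m u + dPPr b m u : ℕ) : ℝ)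
        = (∑ i ∈ Ω₁, u i * (b i : ℝ)) + θ * (dPPr b m u : ℝ) := by
      have : (dPr b m u : ℝ) = ∑ i ∈ Ω₁, (b i : ℝ) := by
        rw [dPr, Nat.cast_sum]
      push_cast
      rw [this]
      rw [Finset.sum_congr rfl (fun i (_ : i ∈ Ω₁) => sub_mul (u i) θ ((b i : ℕ) : ℝ)),
        Finset.sum_sub_distrib, ← Finset.mul_sum]
      ring
    rw [hyval]
    linarith

end Demand
section Opt
set_option linter.unusedSectionVars false
variable {Ω : Type*} [Fintype Ω] [DecidableEq Ω] (b : Ω → ℕ) (m : ℕ) (u : Ω → ℝ)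

lemma sum_update_nat (z : Ω → ℕ) (i0 : Ω) (v : ℕ) :
    ∑ i, Function.update z i0 v i + z i0 = ∑ i, z i + v := by
  rw [Finset.sum_update_of_mem (Finset.mem_univ i0)]
  have h2 := Finset.sum_eq_sum_sdiff_singleton_add (Finset.mem_univ i0) z
  omega

lemma sum_mul_update (z : Ω → ℕ) (i0 : Ω) (v : ℕ) :
    ∑ i, u i * ((Function.update z i0 v i : ℕ) : ℝ)
      = ∑ i, u i * (z i : ℝ) - u i0 * (z i0 : ℝ) + u i0 * (v : ℝ) := by
  have key : ∀ i, u i * ((Function.update z i0 v i : ℕ) : ℝ)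
      = Function.update (fun i => u i * (z i : ℝ)) i0 (u i0 * (v : ℝ)) i := by
    intro i
    by_cases h : i = i0
    · subst h; simp
    · rw [Function.update_of_ne h, Function.update_of_ne h]
  rw [Finset.sum_congr rfl (fun i _ => key i),
    Finset.sum_update_of_mem (Finset.mem_univ i0)]
  have h2 := Finset.sum_eq_sum_sdiff_singleton_add (Finset.mem_univ i0)
    (fun i => u i * (z i : ℝ))
  linarith

lemma optimal_structure (hm : m ≠ 0) (hP : (posPayoffs u).Nonempty)
    (y : Ω → ℕ) (hy : ∀ i, y i ≤ b i) (hysum : ∑ i, y i ≤ m)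
    (hopt : ∀ z : Ω → ℕ, (∀ i, z i ≤ b i) → ∑ i, z i ≤ m →
      ∑ i, u i * (z i : ℝ) ≤ ∑ i, u i * (y i : ℝ)) :
    (∀ i ∈ OmegaP b m u, y i = b i) ∧ ∑ i ∈ OmegaPP b m u, y i = dPPr b m u := by
  set θ := theta b m u with hθdef
  have hθpos : 0 < θ := theta_pos b m u hP
  obtain ⟨hmin, hPPle, hdlt⟩ := struct_main b m u hm hP
  have hmemP : ∀ i, i ∈ OmegaP b m u ↔ θ < u i := fun i => mem_omegaP_iff b m u hm hP
  have hmemPP : ∀ i, i ∈ OmegaPP b m u ↔ u i = θ := fun i => mem_omegaPP_iff b m u hm hP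
  -- step 1: if we can add a unit with positive payoff, demand must be saturated
  have step1 : ∀ i0, y i0 < b i0 → 0 < u i0 → ∑ i, y i = m := by
    intro i0 hlt hpos
    by_contra hne
    have hsum_lt : ∑ i, y i < m := lt_of_le_of_ne hysum hne
    set z := Function.update y i0 (y i0 + 1) with hzdef
    have hzle : ∀ i, z i ≤ b i := by
      intro i
      by_cases h : i = i0
      · subst h; rw [hzdef, Function.update_self]; omega
      · rw [hzdef, Function.update_of_ne h]; exact hy i
    have hzsum : ∑ i, z i ≤ m := by
      have := sum_update_nat y i0 (y i0 + 1)
      rw [← hzdef] at this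
      omega
    have := hopt z hzle hzsum
    rw [hzdef, sum_mul_update] at this
    push_cast at this
    nlinarith
  -- step 2: cannot improve by swapping a unit from i1 to i0
  have step2 : ∀ i0 i1, i0 ≠ i1 → y i0 < b i0 → 0 < y i1 → u i1 < u i0 → False := by
    intro i0 i1 hne hlt hpos hu
    set w := Function.update y i1 (y i1 - 1) with hwdef
    set z := Function.update w i0 (y i0 + 1) with hzdef
    have hwi0 : w i0 = y i0 := by rw [hwdef, Function.update_of_ne hne]
    have hzle : ∀ i, z i ≤ b i := by
      intro i
      by_cases h : i = i0
      · subst h; rw [hzdef, Function.update_self]; omega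
      · rw [hzdef, Function.update_of_ne h]
        by_cases h1 : i = i1
        · rw [h1, hwdef, Function.update_self]
          have := hy i1; omega
        · rw [hwdef, Function.update_of_ne h1]; exact hy i
    have hw_sum := sum_update_nat y i1 (y i1 - 1)
    rw [← hwdef] at hw_sum
    have hz_sum := sum_update_nat w i0 (y i0 + 1)
    rw [← hzdef, hwi0] at hz_sum
    have hzsum : ∑ i, z i ≤ m := by omega
    have := hopt z hzle hzsum
    have e1 := sum_mul_update u w i0 (y i0 + 1)
    rw [← hzdef, hwi0] at e1
    have e2 := sum_mul_update u y i1 (y i1 - 1)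
    rw [← hwdef] at e2
    have hcast : ((y i1 - 1 : ℕ) : ℝ) = (y i1 : ℝ) - 1 := by
      have : (1:ℕ) ≤ y i1 := hpos
      push_cast [this]
      ring
    rw [hcast] at e2
    rw [e1, e2] at this
    push_cast at this
    nlinarith
  have ha : ∀ i ∈ OmegaP b m u, y i = b i := by
    intro i0 hi0
    by_contra hne
    have hlt : y i0 < b i0 := lt_of_le_of_ne (hy i0) hne
    have hui0 : θ < u i0 := (hmemP i0).mp hi0
    have hsat : ∑ i, y i = m := step1 i0 hlt (lt_trans hθpos hui0)
    -- find a unit outside OmegaP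
    have h1 : ∑ i ∈ OmegaP b m u, y i ≤ dPr b m u := by
      rw [dPr]; exact Finset.sum_le_sum (fun i hi => hy i)
    have h2 : ∑ i ∈ Finset.univ \ OmegaP b m u, y i + ∑ i ∈ OmegaP b m u, y i = ∑ i, y i :=
      Finset.sum_sdiff (Finset.subset_univ _)
    have h3 : ∑ i ∈ Finset.univ \ OmegaP b m u, y i ≠ 0 := by omega
    obtain ⟨i1, hi1, hyi1⟩ := Finset.exists_ne_zero_of_sum_ne_zero h3
    rw [Finset.mem_sdiff] at hi1
    have hui1 : u i1 ≤ θ := not_lt.mp (fun hc => hi1.2 ((hmemP i1).mpr hc))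
    exact step2 i0 i1 (fun h => hi1.2 (h ▸ hi0)) hlt (Nat.pos_of_ne_zero hyi1)
      (lt_of_le_of_lt hui1 hui0)
  refine ⟨ha, ?_⟩
  have hyPsum : ∑ i ∈ OmegaP b m u, y i = dPr b m u := by
    rw [dPr]; exact Finset.sum_congr rfl ha
  have hUle : ∑ i ∈ OmegaP b m u, y i + ∑ i ∈ OmegaPP b m u, y i ≤ ∑ i, y i := by
    rw [← Finset.sum_union (omegaP_disj_omegaPP b m u hm hP)]
    exact Finset.sum_le_sum_of_subset (Finset.subset_univ _)
  have hle : ∑ i ∈ OmegaPP b m u, y i ≤ dPPr b m u := by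
    have h1 : ∑ i ∈ OmegaPP b m u, y i ≤ ∑ i ∈ OmegaPP b m u, b i :=
      Finset.sum_le_sum (fun i _ => hy i)
    rw [dPPr]
    omega
  rcases lt_or_eq_of_le hle with hltPP | h
  · exfalso
    -- find i0 ∈ OmegaPP with y i0 < b i0
    have h1 : ∑ i ∈ OmegaPP b m u, y i < ∑ i ∈ OmegaPP b m u, b i := by omega
    have h2 : ∃ i0 ∈ OmegaPP b m u, y i0 < b i0 := by
      by_contra hc
      push_neg at hc
      have : ∑ i ∈ OmegaPP b m u, b i ≤ ∑ i ∈ OmegaPP b m u, y i :=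
        Finset.sum_le_sum (fun i hi => hc i hi)
      omega
    obtain ⟨i0, hi0, hlt0⟩ := h2
    have hui0 : u i0 = θ := (hmemPP i0).mp hi0
    have hsat : ∑ i, y i = m := step1 i0 hlt0 (hui0 ▸ hθpos)
    have hUsdiff : ∑ i ∈ Finset.univ \ (OmegaP b m u ∪ OmegaPP b m u), y i
        + ∑ i ∈ OmegaP b m u ∪ OmegaPP b m u, y i = ∑ i, y i :=
      Finset.sum_sdiff (Finset.subset_univ _)
    have hUeq : ∑ i ∈ OmegaP b m u ∪ OmegaPP b m u, y i
        = ∑ i ∈ OmegaP b m u, y i + ∑ i ∈ OmegaPP b m u, y i :=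
      Finset.sum_union (omegaP_disj_omegaPP b m u hm hP)
    have h3 : ∑ i ∈ Finset.univ \ (OmegaP b m u ∪ OmegaPP b m u), y i ≠ 0 := by omega
    obtain ⟨i1, hi1, hyi1⟩ := Finset.exists_ne_zero_of_sum_ne_zero h3
    rw [Finset.mem_sdiff, Finset.mem_union] at hi1
    push_neg at hi1
    have hui1 : u i1 < θ := by
      have h4 : u i1 ≤ θ := not_lt.mp (fun hc => hi1.2.1 ((hmemP i1).mpr hc))
      have h5 : u i1 ≠ θ := fun hc => hi1.2.2 ((hmemPP i1).mpr hc)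
      exact lt_of_le_of_ne h4 h5
    exact step2 i0 i1 (fun h => hi1.2.2 (h ▸ hi0)) hlt0 (Nat.pos_of_ne_zero hyi1)
      (by rw [hui0]; exact hui1)
  · exact h

end Opt
section Fwd
set_option linter.unusedSectionVars false
variable {Ω : Type*} [Fintype Ω] [DecidableEq Ω]

lemma exists_le_sum (b : Ω → ℕ) (s : Finset Ω) :
    ∀ n, n ≤ ∑ i ∈ s, b i →
      ∃ w : Ω → ℕ, (∀ i, w i ≤ b i) ∧ (∀ i ∉ s, w i = 0) ∧ ∑ i ∈ s, w i = n := by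
  intro n
  induction n with
  | zero => exact fun _ => ⟨fun _ => 0, by simp, by simp, by simp⟩
  | succ k ih =>
    intro h
    obtain ⟨w, hw1, hw2, hw3⟩ := ih (by omega)
    have hex : ∃ i ∈ s, w i < b i := by
      by_contra hc; push_neg at hc
      have : ∑ i ∈ s, b i ≤ ∑ i ∈ s, w i := Finset.sum_le_sum hc
      omega
    obtain ⟨i0, hi0, hlt⟩ := hex
    refine ⟨Function.update w i0 (w i0 + 1), ?_, ?_, ?_⟩
    · intro i; by_cases h' : i = i0
      · rw [h', Function.update_self]; omega
      · rw [Function.update_of_ne h']; exact hw1 i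
    · intro i hi
      rw [Function.update_of_ne (fun hh : i = i0 => hi (hh ▸ hi0))]
      exact hw2 i hi
    · rw [Finset.sum_update_of_mem hi0]
      have := Finset.sum_eq_sum_sdiff_singleton_add hi0 w
      omega

lemma forward_buyer (b : Ω → ℕ) (m : ℕ) (u : Ω → ℝ)
    (y : Ω → ℕ) (hy : ∀ i, y i ≤ b i) (hysum : ∑ i, y i ≤ m)
    (hopt : ∀ z : Ω → ℕ, (∀ i, z i ≤ b i) → ∑ i, z i ≤ m →
      ∑ i, u i * (z i : ℝ) ≤ ∑ i, u i * (y i : ℝ))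
    (I : Finset Ω) :
    (∑ i ∈ OmegaP b m u ∩ I, b i) +
      (dPPr b m u - ∑ i ∈ OmegaPP b m u \ I, min (b i) (dPPr b m u)) ≤ ∑ i ∈ I, y i := by
  by_cases hdeg : m = 0 ∨ posPayoffs u = ∅
  · rw [omegaP_degenerate b m u hdeg, dPPr_degenerate b m u hdeg]
    simp
  · push_neg at hdeg
    obtain ⟨hm, hPne⟩ := hdeg
    have hP : (posPayoffs u).Nonempty := hPne
    obtain ⟨hb, hPP⟩ := optimal_structure b m u hm hP y hy hysum hopt
    have hA : ∑ i ∈ OmegaP b m u ∩ I, y i = ∑ i ∈ OmegaP b m u ∩ I, b i :=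
      Finset.sum_congr rfl (fun i hi => hb i (Finset.mem_of_mem_inter_left hi))
    have hB : ∑ i ∈ OmegaPP b m u ∩ I, y i + ∑ i ∈ OmegaPP b m u \ I, y i
        = ∑ i ∈ OmegaPP b m u, y i := Finset.sum_inter_add_sum_sdiff _ _ _
    have hC : ∑ i ∈ OmegaPP b m u \ I, y i
        ≤ ∑ i ∈ OmegaPP b m u \ I, min (b i) (dPPr b m u) := by
      refine Finset.sum_le_sum ?_
      intro i hi
      refine le_min (hy i) ?_
      rw [← hPP]
      exact Finset.single_le_sum (fun i _ => Nat.zero_le _)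
        (Finset.sdiff_subset hi)
    have hD : ∑ i ∈ (OmegaP b m u ∩ I) ∪ (OmegaPP b m u ∩ I), y i ≤ ∑ i ∈ I, y i := by
      refine Finset.sum_le_sum_of_subset ?_
      intro i hi
      rw [Finset.mem_union] at hi
      rcases hi with hi | hi
      · exact Finset.mem_of_mem_inter_right hi
      · exact Finset.mem_of_mem_inter_right hi
    have hE : ∑ i ∈ (OmegaP b m u ∩ I) ∪ (OmegaPP b m u ∩ I), y i
        = ∑ i ∈ OmegaP b m u ∩ I, y i + ∑ i ∈ OmegaPP b m u ∩ I, y i := by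
      refine Finset.sum_union ?_
      exact Finset.disjoint_of_subset_left (Finset.inter_subset_left)
        (Finset.disjoint_of_subset_right (Finset.inter_subset_left)
          (omegaP_disj_omegaPP b m u hm hP))
    omega

end Fwd
section Hall
set_option linter.unusedSectionVars false
variable {Ω N : Type*} [Fintype Ω] [Fintype N] [DecidableEq Ω] [DecidableEq N]

lemma card_fin_filter_lt (M n : ℕ) (hn : n ≤ M + 1) :
    ((Finset.univ : Finset (Fin (M+1))).filter (fun k : Fin (M+1) => (k : ℕ) < n)).card = n := by
  have h : ((Finset.univ : Finset (Fin (M+1))).filter (fun k : Fin (M+1) => (k : ℕ) < n)).card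
      = (Finset.range n).card := by
    refine Finset.card_bij' (fun k _ => (k : ℕ))
      (fun a ha => (⟨a % (M+1), Nat.mod_lt _ (by omega)⟩ : Fin (M+1))) ?_ ?_ ?_ ?_
    · intro k hk
      rw [Finset.mem_filter] at hk
      rw [Finset.mem_range]
      exact hk.2
    · intro a ha
      rw [Finset.mem_range] at ha
      rw [Finset.mem_filter]
      have : a % (M+1) = a := Nat.mod_eq_of_lt (by omega)
      refine ⟨Finset.mem_univ _, ?_⟩
      simp only [this]
      omega
    · intro k hk
      rw [Finset.mem_filter] at hk
      have h2 : (k : ℕ) < M + 1 := k.isLt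
      apply Fin.ext
      simp [Nat.mod_eq_of_lt h2]
    · intro a ha
      rw [Finset.mem_range] at ha
      simp [Nat.mod_eq_of_lt (show a < M + 1 by omega)]
  rw [h, Finset.card_range]

lemma hall_alloc (b : Ω → ℕ) (S1 S2 : N → Finset Ω) (c : N → ℕ)
    (hdisj : ∀ j, Disjoint (S1 j) (S2 j))
    (hc : ∀ j, c j ≤ ∑ i ∈ S2 j, b i)
    (hH : ∀ I : Finset Ω,
      (∑ j, ((∑ i ∈ S1 j ∩ I, b i) + (c j - ∑ i ∈ S2 j \ I, min (b i) (c j))))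
        ≤ ∑ i ∈ I, b i) :
    ∃ x : Ω → N → ℕ, (∀ i, ∑ j, x i j ≤ b i) ∧
      (∀ j, ∀ i ∈ S1 j, x i j = b i) ∧
      (∀ j, ∑ i ∈ S2 j, x i j = c j) ∧
      (∀ j i, x i j ≠ 0 → i ∈ S1 j ∨ i ∈ S2 j) := by
  rcases isEmpty_or_nonempty Ω with hΩ | hΩ
  · refine ⟨fun _ _ => 0, fun i => by simp, fun j i hi => (hΩ.false i).elim,
      fun j => ?_, fun j i => by simp⟩
    have h1 : S2 j = ∅ := Finset.eq_empty_of_isEmpty _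
    have h2 := hc j
    rw [h1] at h2 ⊢
    simp only [Finset.sum_empty] at h2 ⊢
    omega
  obtain ⟨i₀⟩ := hΩ
  set M := ∑ i, b i with hM
  have hbM : ∀ i, b i ≤ M := fun i =>
    Finset.single_le_sum (fun i _ => Nat.zero_le (b i)) (Finset.mem_univ i)
  have hcM : ∀ j, c j ≤ M := fun j =>
    le_trans (hc j) (Finset.sum_le_sum_of_subset (Finset.subset_univ _))
  -- the left vertex set: units of demand
  set valid : N × Option Ω × Fin (M+1) → Prop := fun q =>
    (∃ i, q.2.1 = some i ∧ i ∈ S1 q.1 ∧ (q.2.2 : ℕ) < b i) ∨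
    (q.2.1 = none ∧ (q.2.2 : ℕ) < c q.1) with hvalid
  have hdec : DecidablePred valid := fun q => by
    rw [hvalid]; infer_instance
  set L : Finset (N × Option Ω × Fin (M+1)) := Finset.univ.filter valid with hL
  have hmemL : ∀ q : N × Option Ω × Fin (M+1), q ∈ L ↔ valid q := by
    intro q
    rw [hL, Finset.mem_filter]
    simp
  -- the right vertex set: units of supply
  set A : Finset (Ω × Fin (M+1)) := Finset.univ.filter (fun r => (r.2 : ℕ) < b r.1) with hA
  have hmemA : ∀ r : Ω × Fin (M+1), r ∈ A ↔ (r.2 : ℕ) < b r.1 := by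
    intro r
    rw [hA, Finset.mem_filter]
    simp
  have cardfiber : ∀ i, (A.filter (fun r => r.1 = i)).card = b i := by
    intro i
    rw [← card_fin_filter_lt M (b i) (by have := hbM i; omega)]
    refine Finset.card_bij' (fun r _ => r.2) (fun k _ => (i, k)) ?_ ?_ ?_ ?_
    · intro r hr
      rw [Finset.mem_filter] at hr
      rw [Finset.mem_filter]
      refine ⟨Finset.mem_univ _, ?_⟩
      have h2 := (hmemA r).mp hr.1
      rw [hr.2] at h2
      exact h2
    · intro k hk
      rw [Finset.mem_filter] at hk
      rw [Finset.mem_filter]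
      exact ⟨(hmemA (i, k)).mpr hk.2, rfl⟩
    · intro r hr
      obtain ⟨r1, r2⟩ := r
      rw [Finset.mem_filter] at hr
      exact congrArg (fun a => (a, r2)) hr.2.symm
    · intro k _; rfl
  have fiber_disj : ∀ (I : Finset Ω), (I : Set Ω).PairwiseDisjoint
      (fun i => A.filter (fun r => r.1 = i)) := by
    intro I i _ i' _ hne
    simp only [Function.onFun]
    rw [Finset.disjoint_left]
    intro r hr hr'
    rw [Finset.mem_filter] at hr hr'
    exact hne (hr.2.symm.trans hr'.2)
  -- the neighborhoods
  set t : {q // q ∈ L} → Finset (Ω × Fin (M+1)) := fun q =>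
    (q.1.2.1).elim (A.filter (fun r => r.1 ∈ S2 q.1.1)) (fun i => A.filter (fun r => r.1 = i))
    with ht
  have ht_some : ∀ (q : {q // q ∈ L}) i', q.1.2.1 = some i' →
      t q = A.filter (fun r => r.1 = i') := by
    intro q i' h
    simp only [ht, h, Option.elim]
  have ht_none : ∀ (q : {q // q ∈ L}), q.1.2.1 = none →
      t q = A.filter (fun r => r.1 ∈ S2 q.1.1) := by
    intro q h
    simp only [ht, h, Option.elim]
  have hval_cases : ∀ (q : {q // q ∈ L}),
      (∃ i', q.1.2.1 = some i' ∧ i' ∈ S1 q.1.1 ∧ ((q.1.2.2 : ℕ) < b i')) ∨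
      (q.1.2.1 = none ∧ (q.1.2.2 : ℕ) < c q.1.1) := by
    intro q
    have := (hmemL q.1).mp q.2
    rw [hvalid] at this
    exact this
  have tsubA : ∀ q, t q ⊆ A := by
    intro q
    rcases hval_cases q with ⟨i', h, _, _⟩ | ⟨h, _⟩
    · rw [ht_some q i' h]; exact Finset.filter_subset _ _
    · rw [ht_none q h]; exact Finset.filter_subset _ _
  -- verify the Hall condition
  have hallcond : ∀ s : Finset {q // q ∈ L}, s.card ≤ (s.biUnion t).card := by
    intro s
    set I : Finset Ω := s.biUnion (fun q => (t q).image Prod.fst) with hI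
    have hIcard : (s.biUnion t).card = ∑ i ∈ I, b i := by
      have heq : s.biUnion t = I.biUnion (fun i => A.filter (fun r => r.1 = i)) := by
        ext r
        constructor
        · intro hmem
          obtain ⟨q, hq, hr⟩ := Finset.mem_biUnion.mp hmem
          refine Finset.mem_biUnion.mpr ⟨r.1,
            Finset.mem_biUnion.mpr ⟨q, hq, Finset.mem_image.mpr ⟨r, hr, rfl⟩⟩, ?_⟩
          rw [Finset.mem_filter]
          exact ⟨tsubA q hr, rfl⟩
        · intro hmem
          obtain ⟨i, hi, hr⟩ := Finset.mem_biUnion.mp hmem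
          rw [Finset.mem_filter] at hr
          obtain ⟨q, hq, hi2⟩ := Finset.mem_biUnion.mp hi
          obtain ⟨r', hr', hr'1⟩ := Finset.mem_image.mp hi2
          refine Finset.mem_biUnion.mpr ⟨q, hq, ?_⟩
          rcases hval_cases q with ⟨i1, hoq, _, _⟩ | ⟨hoq, _⟩
          · rw [ht_some q i1 hoq] at hr' ⊢
            rw [Finset.mem_filter] at hr' ⊢
            exact ⟨hr.1, by rw [hr.2, ← hr'1]; exact hr'.2⟩
          · rw [ht_none q hoq] at hr' ⊢
            rw [Finset.mem_filter] at hr' ⊢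
            exact ⟨hr.1, by rw [hr.2, ← hr'1]; exact hr'.2⟩
      rw [heq, Finset.card_biUnion (fiber_disj I)]
      exact Finset.sum_congr rfl (fun i _ => cardfiber i)
    rw [hIcard]
    refine le_trans ?_ (hH I)
    rw [Finset.card_eq_sum_card_fiberwise
      (f := fun q : {q // q ∈ L} => q.1.1) (t := Finset.univ) (fun q _ => Finset.mem_univ _)]
    refine Finset.sum_le_sum ?_
    intro j _
    set sj := s.filter (fun q => q.1.1 = j) with hsj
    set sm := sj.filter (fun q => q.1.2.1 ≠ none) with hsm
    set sf := sj.filter (fun q => q.1.2.1 = none) with hsf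
    have hsplit : sf.card + sm.card = sj.card := by
      rw [hsf, hsm]
      exact Finset.card_filter_add_card_filter_not _
    have hmust : sm.card ≤ ∑ i ∈ S1 j ∩ I, b i := by
      have hT : (A.filter (fun r => r.1 ∈ S1 j ∩ I)).card = ∑ i ∈ S1 j ∩ I, b i := by
        rw [Finset.card_eq_sum_card_fiberwise (f := Prod.fst) (s := A.filter (fun r => r.1 ∈ S1 j ∩ I)) (t := S1 j ∩ I)
          (fun r hr => (Finset.mem_filter.mp hr).2)]
        refine Finset.sum_congr rfl ?_
        intro i hi
        rw [← cardfiber i]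
        congr 1
        ext r
        constructor
        · intro h
          have h' := Finset.mem_filter.mp h
          exact Finset.mem_filter.mpr ⟨(Finset.mem_filter.mp h'.1).1, h'.2⟩
        · intro h
          have h' := Finset.mem_filter.mp h
          refine Finset.mem_filter.mpr ⟨Finset.mem_filter.mpr ⟨h'.1, ?_⟩, h'.2⟩
          rw [h'.2]
          exact hi
      rw [← hT]
      refine Finset.card_le_card_of_injOn (fun q => (q.1.2.1.getD i₀, q.1.2.2)) ?_ ?_
      · intro q hq
        simp only [Finset.mem_coe, hsm, hsj, Finset.mem_filter] at hq
        obtain ⟨⟨hqs, hqj⟩, hqm⟩ := hq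
        rcases hval_cases q with ⟨i, hi1, hi2, hi3⟩ | ⟨h1, _⟩
        · have hgd : q.1.2.1.getD i₀ = i := by rw [hi1]; rfl
          rw [Finset.mem_coe, Finset.mem_filter]
          constructor
          · rw [hmemA]
            simp only [hgd]
            exact hi3
          · simp only [hgd]
            rw [Finset.mem_inter]
            refine ⟨hqj ▸ hi2, ?_⟩
            rw [hI]
            refine Finset.mem_biUnion.mpr ⟨q, hqs, ?_⟩
            refine Finset.mem_image.mpr ⟨(i, q.1.2.2), ?_, rfl⟩
            rw [ht_some q i hi1, Finset.mem_filter]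
            exact ⟨(hmemA (i, q.1.2.2)).mpr hi3, rfl⟩
        · exact absurd h1 hqm
      · intro q hq q' hq' heq
        simp only [Finset.mem_coe, hsm, hsj, Finset.mem_filter] at hq hq'
        rcases hval_cases q with ⟨i, hi1, _, _⟩ | ⟨h1, _⟩
        · rcases hval_cases q' with ⟨i', hi1', _, _⟩ | ⟨h1', _⟩
          · have e1 : (q.1.2.1.getD i₀) = i := by rw [hi1]; rfl
            have e2 : (q'.1.2.1.getD i₀) = i' := by rw [hi1']; rfl
            rw [Prod.mk.injEq, e1, e2] at heq
            apply Subtype.ext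
            have hjj : q.1.1 = q'.1.1 := by rw [hq.1.2, hq'.1.2]
            refine Prod.ext hjj (Prod.ext ?_ heq.2)
            rw [hi1, hi1', heq.1]
          · exact absurd h1' hq'.2
        · exact absurd h1 hq.2
    have hflex : sf.card ≤ c j - ∑ i ∈ S2 j \ I, min (b i) (c j) := by
      rcases Finset.eq_empty_or_nonempty sf with hemp | hne
      · rw [hemp]; simp
      have hcard : sf.card ≤ c j := by
        rw [← card_fin_filter_lt M (c j) (by have := hcM j; omega)]
        refine Finset.card_le_card_of_injOn (fun q => q.1.2.2) ?_ ?_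
        · intro q hq
          simp only [Finset.mem_coe, hsf, hsj, Finset.mem_filter] at hq
          rcases hval_cases q with ⟨i, hi1, _, _⟩ | ⟨h1, h2⟩
          · rw [hq.2] at hi1; exact absurd hi1.symm (Option.some_ne_none i)
          · rw [Finset.mem_coe, Finset.mem_filter]
            exact ⟨Finset.mem_univ _, hq.1.2 ▸ h2⟩
        · intro q hq q' hq' heq
          simp only [Finset.mem_coe, hsf, hsj, Finset.mem_filter] at hq hq'
          apply Subtype.ext
          have h1 : q.1.1 = q'.1.1 := by rw [hq.1.2, hq'.1.2]
          have h2 : q.1.2.1 = q'.1.2.1 := by rw [hq.2, hq'.2]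
          exact Prod.ext h1 (Prod.ext h2 heq)
      have hzero : ∑ i ∈ S2 j \ I, min (b i) (c j) = 0 := by
        refine Finset.sum_eq_zero ?_
        intro i hi
        rw [Finset.mem_sdiff] at hi
        by_contra hmin
        have hbi : 0 < b i := by omega
        apply hi.2
        obtain ⟨q, hq⟩ := hne
        rw [hsf, Finset.mem_filter, hsj, Finset.mem_filter] at hq
        rw [hI]
        refine Finset.mem_biUnion.mpr ⟨q, hq.1.1, ?_⟩
        refine Finset.mem_image.mpr ⟨(i, (⟨0, by omega⟩ : Fin (M+1))), ?_, rfl⟩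
        rw [ht_none q hq.2, Finset.mem_filter]
        refine ⟨(hmemA _).mpr ?_, hq.1.2 ▸ hi.1⟩
        simpa using hbi
      omega
    omega
  -- apply Hall's theorem
  obtain ⟨f, hfinj, hft⟩ := (Finset.all_card_le_biUnion_card_iff_exists_injective t).mp hallcond
  have hf_some : ∀ (q : {q // q ∈ L}) i', q.1.2.1 = some i' → (f q).1 = i' := by
    intro q i' h
    have := hft q
    rw [ht_some q i' h, Finset.mem_filter] at this
    exact this.2
  have hf_none : ∀ (q : {q // q ∈ L}), q.1.2.1 = none → (f q).1 ∈ S2 q.1.1 := by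
    intro q h
    have := hft q
    rw [ht_none q h, Finset.mem_filter] at this
    exact this.2
  have hfA : ∀ q, f q ∈ A := fun q => tsubA q (hft q)
  -- build the allocation
  set x : Ω → N → ℕ := fun i j =>
    ((Finset.univ : Finset {q // q ∈ L}).filter
      (fun q => q.1.1 = j ∧ (f q).1 = i)).card with hx
  have hsupply : ∀ i, ∑ j, x i j ≤ b i := by
    intro i
    have htot : ∑ j, x i j = ((Finset.univ : Finset {q // q ∈ L}).filter
        (fun q => (f q).1 = i)).card := by
      rw [Finset.card_eq_sum_card_fiberwise
        (f := fun q : {q // q ∈ L} => q.1.1) (t := Finset.univ) (fun q _ => Finset.mem_univ _)]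
      refine Finset.sum_congr rfl ?_
      intro j _
      simp only [hx, Finset.filter_filter]
      congr 1
      ext q
      simp only [Finset.mem_filter, Finset.mem_univ, true_and]
      tauto
    rw [htot, ← cardfiber i]
    refine Finset.card_le_card_of_injOn f ?_ ?_
    · intro q hq
      rw [Finset.mem_coe, Finset.mem_filter] at hq ⊢
      exact ⟨hfA q, hq.2⟩
    · exact fun q _ q' _ h => hfinj h
  have hxb : ∀ i j, x i j ≤ b i := by
    intro i j
    exact le_trans (Finset.single_le_sum (fun j' (_ : j' ∈ Finset.univ) => Nat.zero_le (x i j'))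
      (Finset.mem_univ j)) (hsupply i)
  refine ⟨x, hsupply, ?_, ?_, ?_⟩
  · -- S1 saturation
    intro j i hi
    refine le_antisymm (hxb i j) ?_
    rcases Nat.eq_zero_or_pos (b i) with hb0 | hb0
    · exact hb0 ▸ Nat.zero_le _
    have hU : ∀ k : Fin (M+1), (k : ℕ) < b i → ((j, some i, k) : N × Option Ω × Fin (M+1)) ∈ L := by
      intro k hk
      rw [hmemL, hvalid]
      exact Or.inl ⟨i, rfl, hi, hk⟩
    rw [hx, ← card_fin_filter_lt M (b i) (by have := hbM i; omega)]
    have hbne : ∀ k : Fin (M+1), k ∈ (Finset.univ : Finset (Fin (M+1))).filter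
        (fun k : Fin (M+1) => (k : ℕ) < b i) → (k : ℕ) < b i :=
      fun k hk => (Finset.mem_filter.mp hk).2
    refine Finset.card_le_card_of_injOn
      (fun k => if h : (k : ℕ) < b i then ⟨(j, some i, k), hU k h⟩ else
        ⟨(j, some i, (⟨0, Nat.succ_pos M⟩ : Fin (M+1))), hU _ hb0⟩) ?_ ?_
    · intro k hk
      have hklt := hbne k hk
      simp only [dif_pos hklt]
      exact Finset.mem_filter.mpr ⟨Finset.mem_univ _, rfl, hf_some _ i rfl⟩
    · intro k hk k' hk' heq
      simp only [dif_pos (hbne k (Finset.mem_coe.mp hk)),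
        dif_pos (hbne k' (Finset.mem_coe.mp hk'))] at heq
      have := congrArg (fun q : {q // q ∈ L} => q.1.2.2) heq
      simpa using this
  · -- S2 allocation
    intro j
    have hVcard : ((Finset.univ : Finset {q // q ∈ L}).filter
        (fun q => q.1.1 = j ∧ q.1.2.1 = none)).card = c j := by
      rw [← card_fin_filter_lt M (c j) (by have := hcM j; omega)]
      have hU : ∀ k : Fin (M+1), (k : ℕ) < c j →
          ((j, none, k) : N × Option Ω × Fin (M+1)) ∈ L := by
        intro k hk
        rw [hmemL, hvalid]
        exact Or.inr ⟨rfl, hk⟩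
      refine Finset.card_bij' (fun q _ => q.1.2.2)
        (fun k hk => ⟨(j, none, k), hU k (by
          have := Finset.mem_filter.mp hk
          exact this.2)⟩) ?_ ?_ ?_ ?_
      · intro q hq
        rw [Finset.mem_filter] at hq
        obtain ⟨_, hqj, hqn⟩ := hq
        rcases hval_cases q with ⟨i, hi1, _, _⟩ | ⟨h1, h2⟩
        · rw [hqn] at hi1; exact absurd hi1.symm (Option.some_ne_none i)
        · rw [Finset.mem_filter]
          exact ⟨Finset.mem_univ _, hqj ▸ h2⟩
      · intro k hk
        rw [Finset.mem_filter]
        exact ⟨Finset.mem_univ _, rfl, rfl⟩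
      · intro q hq
        rw [Finset.mem_filter] at hq
        apply Subtype.ext
        symm
        exact Prod.ext hq.2.1 (Prod.ext hq.2.2 rfl)
      · intro k _; rfl
    have hVeq : ∑ i ∈ S2 j, x i j = ((Finset.univ : Finset {q // q ∈ L}).filter
        (fun q => q.1.1 = j ∧ q.1.2.1 = none)).card := by
      rw [Finset.card_eq_sum_card_fiberwise (f := fun q => (f q).1) (t := S2 j) ?_]
      · refine Finset.sum_congr rfl ?_
        intro i hi
        simp only [hx, Finset.filter_filter]
        congr 1
        ext q
        simp only [Finset.mem_filter, Finset.mem_univ, true_and]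
        constructor
        · rintro ⟨hqj, hqi⟩
          refine ⟨⟨hqj, ?_⟩, hqi⟩
          rcases hval_cases q with ⟨i', hi1, hi2, _⟩ | ⟨h1, _⟩
          · exfalso
            have hfi : (f q).1 = i' := hf_some q i' hi1
            rw [hqi] at hfi
            have hii : i ∈ S1 j := by rw [hfi]; exact hqj ▸ hi2
            exact Finset.disjoint_left.mp (hdisj j) hii hi
          · exact h1
        · rintro ⟨⟨hqj, _⟩, hqi⟩
          exact ⟨hqj, hqi⟩
      · intro q hq
        rw [Finset.mem_coe, Finset.mem_filter] at hq
        have := hf_none q hq.2.2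
        rw [hq.2.1] at this
        exact this
    rw [hVeq, hVcard]
  · -- support
    intro j i hne
    rw [hx] at hne
    have : ∃ q ∈ (Finset.univ : Finset {q // q ∈ L}),
        q.1.1 = j ∧ (f q).1 = i := by
      by_contra hc'
      push_neg at hc'
      apply hne
      rw [Finset.card_eq_zero]
      rw [Finset.filter_eq_empty_iff]
      intro q hq
      intro hcon
      exact (hc' q hq hcon.1) hcon.2
    obtain ⟨q, _, hqj, hqi⟩ := this
    rcases hval_cases q with ⟨i', hi1, hi2, _⟩ | ⟨h1, _⟩
    · left
      have : (f q).1 = i' := hf_some q i' hi1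
      rw [hqi] at this
      rw [this]
      exact hqj ▸ hi2
    · right
      have := hf_none q h1
      rw [hqj, hqi] at this
      exact this

end Hall
section MainAux
set_option linter.unusedSectionVars false
variable {Ω : Type*} [Fintype Ω] [DecidableEq Ω] (b : Ω → ℕ) (m : ℕ) (u : Ω → ℝ)

lemma omegaP_disj_omegaPP_all : Disjoint (OmegaP b m u) (OmegaPP b m u) := by
  by_cases hdeg : m = 0 ∨ posPayoffs u = ∅
  · rw [omegaP_degenerate b m u hdeg]
    exact Finset.disjoint_empty_left _
  · push_neg at hdeg
    exact omegaP_disj_omegaPP b m u hdeg.1 hdeg.2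

lemma dPPr_le_sum : dPPr b m u ≤ ∑ i ∈ OmegaPP b m u, b i := by
  rw [dPPr]; exact min_le_left _ _

lemma dPr_add_dPPr_le : dPr b m u + dPPr b m u ≤ m := by
  by_cases hdeg : m = 0 ∨ posPayoffs u = ∅
  · rw [dPr, omegaP_degenerate b m u hdeg, dPPr_degenerate b m u hdeg]
    simp
  · push_neg at hdeg
    obtain ⟨hmin, _, _⟩ := struct_main b m u hdeg.1 hdeg.2
    rw [hmin]
    exact min_le_left _ _

end MainAux

/-- Hall-type characterization of competitive prices. -/
theorem competitive_iff_hall_condition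
    {Ω N : Type*} [Fintype Ω] [Fintype N] [DecidableEq Ω]
    (b : Ω → ℕ) (d : N → ℕ) (v : Ω → N → ℕ)
    (p : Ω → ℝ) (hp : ∀ i, 0 ≤ p i) :
    Competitive b d v p ↔ ∀ I : Finset Ω, overDemand b d v p I ≤ ∑ i ∈ I, b i := by
  classical
  constructor
  · rintro ⟨hp0, x, ⟨hfeas1, hfeas2⟩, hdem⟩ I
    rw [overDemand]
    have key : ∀ j, (∑ i ∈ OmegaP b (d j) (payoff v p j) ∩ I, b i) +
        (dPPr b (d j) (payoff v p j) -
          ∑ i ∈ OmegaPP b (d j) (payoff v p j) \ I,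
            min (b i) (dPPr b (d j) (payoff v p j))) ≤ ∑ i ∈ I, x i j := by
      intro j
      obtain ⟨⟨hb1, hb2⟩, hopt⟩ := hdem j
      refine forward_buyer b (d j) (payoff v p j) (fun i => x i j) hb1 hb2 ?_ I
      intro z hz1 hz2
      exact hopt z ⟨hz1, hz2⟩
    calc ∑ j, ((∑ i ∈ OmegaP b (d j) (payoff v p j) ∩ I, b i) +
          (dPPr b (d j) (payoff v p j) -
            ∑ i ∈ OmegaPP b (d j) (payoff v p j) \ I,
              min (b i) (dPPr b (d j) (payoff v p j))))
        ≤ ∑ j, ∑ i ∈ I, x i j := Finset.sum_le_sum (fun j _ => key j)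
      _ = ∑ i ∈ I, ∑ j, x i j := Finset.sum_comm
      _ ≤ ∑ i ∈ I, b i := Finset.sum_le_sum (fun i _ => hfeas1 i)
  · intro hH
    refine ⟨hp, ?_⟩
    obtain ⟨x, hsupply, hS1, hS2, hsupp⟩ := hall_alloc b
      (fun j => OmegaP b (d j) (payoff v p j))
      (fun j => OmegaPP b (d j) (payoff v p j))
      (fun j => dPPr b (d j) (payoff v p j))
      (fun j => omegaP_disj_omegaPP_all b (d j) (payoff v p j))
      (fun j => dPPr_le_sum b (d j) (payoff v p j))
      (fun I => by
        have := hH I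
        rw [overDemand] at this
        exact this)
    have hxb : ∀ i j, x i j ≤ b i := by
      intro i j
      exact le_trans (Finset.single_le_sum (fun j' (_ : j' ∈ Finset.univ) => Nat.zero_le (x i j'))
        (Finset.mem_univ j)) (hsupply i)
    have hsum_j : ∀ j, ∑ i, x i j =
        dPr b (d j) (payoff v p j) + dPPr b (d j) (payoff v p j) := by
      intro j
      have h1 : ∑ i ∈ OmegaP b (d j) (payoff v p j) ∪ OmegaPP b (d j) (payoff v p j), x i j
          = ∑ i, x i j := by
        refine Finset.sum_subset (Finset.subset_univ _) ?_
        intro i _ hni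
        by_contra h0
        apply hni
        rw [Finset.mem_union]
        exact hsupp j i h0
      rw [← h1, Finset.sum_union (omegaP_disj_omegaPP_all b (d j) (payoff v p j))]
      congr 1
      · rw [dPr]
        exact Finset.sum_congr rfl (fun i hi => hS1 j i hi)
      · exact hS2 j
    have hsum_le : ∀ j, ∑ i, x i j ≤ d j := by
      intro j
      rw [hsum_j j]
      exact dPr_add_dPPr_le b (d j) (payoff v p j)
    refine ⟨x, ⟨hsupply, hsum_le⟩, ?_⟩
    intro j
    refine ⟨⟨fun i => hxb i j, hsum_le j⟩, ?_⟩
    intro z hz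
    exact canonical_utility_ge b (d j) (payoff v p j) (fun i => x i j)
      (fun i => hxb i j) (hsum_le j) (hS1 j) (hS2 j)
      (fun i h0 => by
        rcases hsupp j i h0 with h | h
        · exact Or.inl h
        · exact Or.inr (Or.inl h))
      z hz.1 hz.2
end
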